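/- arXiv:1403.0012 — 10 statements merged into one kernel-verified Lean document; each statement's English description precedes it below -/
import Mathlib

section
/- For every δ ∈ (0,1) and all reals a > 0 and ρ > 0, the improper integral ∫_ρ^∞ (1 − e^{−a/x}) δ x^{δ−1} dx converges and equals a^δ γ(1−δ, a/ρ) − ρ^δ (1 − e^{−a/ρ}), where γ(a,z) := ∫_0^z t^{a−1} e^{−t} dt is the lower incomplete gamma function. -/
open MeasureTheory Real Set Filter Topology

/-- The lower incomplete gamma function `γ(a, z) = ∫_0^z t^(a-1) e^(-t) dt`. -/
noncomputable def lowerGamma (a z : ℝ) : ℝ := ∫ t in (0:ℝ)..z, t ^ (a - 1) * Real.exp (-t)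

lemma aux_meas (δ : ℝ) : Measurable fun t : ℝ => t ^ (-δ) * Real.exp (-t) := by
  fun_prop

lemma aux_intInt {δ : ℝ} (hδ1 : δ < 1) {b : ℝ} (hb : 0 ≤ b) :
    IntervalIntegrable (fun t : ℝ => t ^ (-δ) * Real.exp (-t)) volume 0 b := by
  have hbase : IntervalIntegrable (fun t : ℝ => t ^ (-δ)) volume 0 b :=
    intervalIntegral.intervalIntegrable_rpow' (by linarith)
  rw [intervalIntegrable_iff_integrableOn_Ioc_of_le hb] at hbase ⊢
  refine hbase.mono' (aux_meas δ).aestronglyMeasurable ?_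
  filter_upwards [ae_restrict_mem measurableSet_Ioc] with t ht
  rw [norm_mul]
  have h0 : 0 ≤ t ^ (-δ) := Real.rpow_nonneg ht.1.le _
  have h1 : ‖Real.exp (-t)‖ ≤ 1 := by
    rw [Real.norm_eq_abs, abs_of_pos (Real.exp_pos _)]
    exact Real.exp_le_one_iff.mpr (by linarith [ht.1])
  calc ‖t ^ (-δ)‖ * ‖Real.exp (-t)‖ ≤ ‖t ^ (-δ)‖ * 1 :=
        mul_le_mul_of_nonneg_left h1 (norm_nonneg _)
    _ = t ^ (-δ) := by rw [mul_one, Real.norm_eq_abs, abs_of_nonneg h0]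

lemma lg_eq (δ : ℝ) (z : ℝ) :
    lowerGamma (1 - δ) z = ∫ t in (0:ℝ)..z, t ^ (-δ) * Real.exp (-t) := by
  simp only [lowerGamma, show (1:ℝ) - δ - 1 = -δ by ring]

lemma lg_deriv {δ : ℝ} (hδ1 : δ < 1) {z : ℝ} (hz : 0 < z) :
    HasDerivAt (lowerGamma (1 - δ)) (z ^ (-δ) * Real.exp (-z)) z := by
  have h : lowerGamma (1 - δ) = fun w => ∫ t in (0:ℝ)..w, t ^ (-δ) * Real.exp (-t) := by
    funext w; exact lg_eq δ w
  rw [h]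
  refine intervalIntegral.integral_hasDerivAt_right (aux_intInt hδ1 hz.le) ?_ ?_
  · exact (aux_meas δ).aestronglyMeasurable.stronglyMeasurableAtFilter
  · exact ((Real.continuousAt_rpow_const z (-δ) (Or.inl hz.ne')).mul
      (Real.continuous_exp.comp continuous_neg).continuousAt)

lemma lg_nonneg {δ : ℝ} (hδ1 : δ < 1) {u : ℝ} (hu : 0 ≤ u) :
    0 ≤ lowerGamma (1 - δ) u := by
  rw [lg_eq]
  apply intervalIntegral.integral_nonneg hu
  intro t ht
  exact mul_nonneg (Real.rpow_nonneg ht.1 _) (Real.exp_pos _).le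

lemma lg_bound {δ : ℝ} (hδ0 : 0 < δ) (hδ1 : δ < 1) {u : ℝ} (hu : 0 ≤ u) :
    lowerGamma (1 - δ) u ≤ u ^ (1 - δ) / (1 - δ) := by
  rw [lg_eq]
  have h1 : (∫ t in (0:ℝ)..u, t ^ (-δ) * Real.exp (-t)) ≤ ∫ t in (0:ℝ)..u, t ^ (-δ) := by
    apply intervalIntegral.integral_mono_on hu (aux_intInt hδ1 hu)
      (intervalIntegral.intervalIntegrable_rpow' (by linarith))
    intro t ht
    have ht0 : 0 ≤ t := ht.1
    have : Real.exp (-t) ≤ 1 := Real.exp_le_one_iff.mpr (by linarith)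
    calc t ^ (-δ) * Real.exp (-t) ≤ t ^ (-δ) * 1 :=
          mul_le_mul_of_nonneg_left this (Real.rpow_nonneg ht0 _)
      _ = t ^ (-δ) := mul_one _
  have h2 : (∫ t in (0:ℝ)..u, t ^ (-δ)) = u ^ (1 - δ) / (1 - δ) := by
    rw [integral_rpow (Or.inl (by linarith))]
    rw [Real.zero_rpow (by intro h; linarith [h] : -δ + 1 ≠ 0)]
    rw [show -δ + 1 = 1 - δ by ring]
    ring
  linarith

lemma one_sub_exp_neg_le {u : ℝ} : 1 - Real.exp (-u) ≤ u := by
  have := Real.add_one_le_exp (-u)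
  linarith

/-- For `δ ∈ (0,1)`, `a > 0`, `ρ > 0`, the improper integral
`∫_ρ^∞ (1 − e^{−a/x}) δ x^{δ−1} dx` converges and equals
`a^δ γ(1−δ, a/ρ) − ρ^δ (1 − e^{−a/ρ})`. -/
theorem stmt_0 (δ a ρ : ℝ) (hδ : δ ∈ Set.Ioo (0:ℝ) 1) (ha : 0 < a) (hρ : 0 < ρ) :
    IntegrableOn (fun x : ℝ => (1 - Real.exp (-a / x)) * δ * x ^ (δ - 1)) (Set.Ioi ρ) ∧
    ∫ x in Set.Ioi ρ, (1 - Real.exp (-a / x)) * δ * x ^ (δ - 1)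
      = a ^ δ * lowerGamma (1 - δ) (a / ρ) - ρ ^ δ * (1 - Real.exp (-a / ρ)) := by
  obtain ⟨hδ0, hδ1⟩ := hδ
  set G : ℝ → ℝ := fun x => x ^ δ * (1 - Real.exp (-a / x)) - a ^ δ * lowerGamma (1 - δ) (a / x)
    with hGdef
  -- derivative of G at every x ≥ ρ
  have hderiv : ∀ x ∈ Ici ρ, HasDerivAt G ((1 - Real.exp (-a / x)) * δ * x ^ (δ - 1)) x := by
    intro x hx
    have hx0 : 0 < x := lt_of_lt_of_le hρ hx
    have hinv : HasDerivAt (fun y : ℝ => a / y) (-(a / x ^ 2)) x := by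
      simpa [div_eq_mul_inv, mul_neg] using (hasDerivAt_inv hx0.ne').const_mul a
    have hninv : HasDerivAt (fun y : ℝ => -a / y) (a / x ^ 2) x := by
      simp only [neg_div]
      have h := hinv.neg; rw [neg_neg] at h; exact h
    have hexp : HasDerivAt (fun y : ℝ => Real.exp (-a / y))
        (Real.exp (-a / x) * (a / x ^ 2)) x := hninv.exp
    have hpow : HasDerivAt (fun y : ℝ => y ^ δ) (δ * x ^ (δ - 1)) x :=
      Real.hasDerivAt_rpow_const (Or.inl hx0.ne')
    have hprod := hpow.mul ((hasDerivAt_const x (1:ℝ)).sub hexp)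
    have hax : 0 < a / x := div_pos ha hx0
    have hγ := (lg_deriv hδ1 hax).comp x hinv
    have hG := hprod.sub (hγ.const_mul (a ^ δ))
    have key : a ^ δ * (a / x) ^ (-δ) = x ^ δ := by
      rw [Real.rpow_neg hax.le, Real.div_rpow ha.le hx0.le]
      have h1 : (0:ℝ) < a ^ δ := Real.rpow_pos_of_pos ha δ
      field_simp
    convert hG using 1
    · rfl
    · rfl
    · rfl
    simp only [neg_div]
    have e1 : a ^ δ * ((a / x) ^ (-δ) * Real.exp (-(a / x)) * -(a / x ^ 2))
        = x ^ δ * (Real.exp (-(a / x)) * -(a / x ^ 2)) := by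
      rw [← key]; ring
    rw [e1]; simp only [Pi.sub_apply]; ring
  -- nonnegativity of the integrand
  have hpos : ∀ x ∈ Ioi ρ, 0 ≤ (1 - Real.exp (-a / x)) * δ * x ^ (δ - 1) := by
    intro x hx
    have hx0 : 0 < x := hρ.trans hx
    have h1 : Real.exp (-a / x) ≤ 1 := by
      rw [Real.exp_le_one_iff]
      have : 0 < a / x := div_pos ha hx0
      rw [neg_div]; linarith
    have h2 : 0 ≤ x ^ (δ - 1) := (Real.rpow_pos_of_pos hx0 _).le
    have h3 : 0 ≤ 1 - Real.exp (-a / x) := by linarith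
    positivity
  -- limit of G at infinity
  have hlim : Tendsto G atTop (𝓝 0) := by
    have t1 : Tendsto (fun x : ℝ => x ^ δ * (1 - Real.exp (-a / x))) atTop (𝓝 0) := by
      apply squeeze_zero' ?_ ?_ ?_ (g := fun x : ℝ => a * x ^ (δ - 1))
      · filter_upwards [Filter.eventually_gt_atTop (0:ℝ)] with x hx
        have h1 : Real.exp (-a / x) ≤ 1 := by
          rw [Real.exp_le_one_iff, neg_div]
          have : 0 < a / x := div_pos ha hx
          linarith
        exact mul_nonneg (Real.rpow_nonneg hx.le _) (by linarith)
      · filter_upwards [Filter.eventually_gt_atTop (0:ℝ)] with x hx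
        have h1 : 1 - Real.exp (-a / x) ≤ a / x := by
          have := one_sub_exp_neg_le (u := a / x)
          rwa [← neg_div] at this
        have h2 : x ^ δ * (a / x) = a * x ^ (δ - 1) := by
          rw [Real.rpow_sub hx, Real.rpow_one]; ring
        calc x ^ δ * (1 - Real.exp (-a / x)) ≤ x ^ δ * (a / x) :=
              mul_le_mul_of_nonneg_left h1 (Real.rpow_pos_of_pos hx _).le
          _ = a * x ^ (δ - 1) := h2
      · have h : Tendsto (fun x : ℝ => x ^ (δ - 1)) atTop (𝓝 0) := by
          have := tendsto_rpow_neg_atTop (y := 1 - δ) (by linarith)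
          simpa [show -(1 - δ) = δ - 1 by ring] using this
        simpa using h.const_mul a
    have t2 : Tendsto (fun x : ℝ => a ^ δ * lowerGamma (1 - δ) (a / x)) atTop (𝓝 0) := by
      have tlg : Tendsto (fun x : ℝ => lowerGamma (1 - δ) (a / x)) atTop (𝓝 0) := by
        apply squeeze_zero' ?_ ?_ ?_ (g := fun x : ℝ => (a / x) ^ (1 - δ) / (1 - δ))
        · filter_upwards [Filter.eventually_gt_atTop (0:ℝ)] with x hx
          exact lg_nonneg hδ1 (div_pos ha hx).le
        · filter_upwards [Filter.eventually_gt_atTop (0:ℝ)] with x hx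
          exact lg_bound hδ0 hδ1 (div_pos ha hx).le
        · have h1 : Tendsto (fun x : ℝ => (a / x) ^ (1 - δ)) atTop (𝓝 0) := by
            have hdiv : Tendsto (fun x : ℝ => a / x) atTop (𝓝 0) :=
              Filter.Tendsto.div_atTop tendsto_const_nhds tendsto_id
            have hc : ContinuousWithinAt (fun u : ℝ => u ^ (1 - δ)) (Ici 0) 0 :=
              (Real.continuousAt_rpow_const 0 (1 - δ)
                (Or.inr (by linarith))).continuousWithinAt
            have hmem : ∀ᶠ x : ℝ in atTop, a / x ∈ Ici (0:ℝ) := by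
              filter_upwards [Filter.eventually_gt_atTop (0:ℝ)] with x hx
              exact (div_pos ha hx).le
            have h2 := hc.tendsto.comp (tendsto_nhdsWithin_iff.mpr ⟨hdiv, hmem⟩)
            simpa [Function.comp_def, Real.zero_rpow (by intro h; linarith [h] : (1:ℝ) - δ ≠ 0)] using h2
          simpa using h1.div_const (1 - δ)
      simpa using tlg.const_mul (a ^ δ)
    have := t1.sub t2
    simpa [hGdef] using this
  have main := integral_Ioi_of_hasDerivAt_of_nonneg' hderiv hpos hlim
  have mainInt := integrableOn_Ioi_deriv_of_nonneg' hderiv hpos hlim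
  refine ⟨mainInt, ?_⟩
  rw [main]
  simp only [hGdef]
  ring
end

section
/- For every δ ∈ (0,1) and every real s > 0, ∫_0^∞ e^{−x} ( (sx)^δ γ(1−δ, sx) + e^{−sx} − 1 ) dx = s δ ∫_0^1 t^{−δ} (1+st)^{−1} dt, where γ(a,z) := ∫_0^z t^{a−1} e^{−t} dt is the lower incomplete gamma function; in particular both integrals converge. -/
open MeasureTheory Real Set

/-- integrability of `u^(-δ) * φ u` on `Ioo 0 1` for bounded a.e.-measurable φ -/
lemma aux_int_rpow_mul {δ : ℝ} (hδ0 : 0 < δ) (hδ1 : δ < 1) {φ : ℝ → ℝ}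
    (hφ : AEStronglyMeasurable φ (volume.restrict (Ioo 0 1)))
    {C : ℝ} (hC : ∀ᵐ u ∂(volume.restrict (Ioo (0:ℝ) 1)), ‖φ u‖ ≤ C) :
    IntegrableOn (fun u : ℝ => u ^ (-δ) * φ u) (Ioo 0 1) := by
  have h1 : IntegrableOn (fun u : ℝ => u ^ (-δ)) (Ioo 0 1) :=
    (intervalIntegral.integrableOn_Ioo_rpow_iff one_pos).2 (by linarith)
  have := h1.bdd_mul (f := φ) hφ hC
  exact this.congr (Filter.Eventually.of_forall (fun u => mul_comm _ _))

lemma aux_exp_int (c : ℝ) : IntegrableOn (fun u : ℝ => Real.exp (-(c * u))) (Ioo 0 1) :=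
  ((Continuous.integrableOn_Icc (by continuity)).mono_set Ioo_subset_Icc_self : _)

lemma aux_sub_exp_int {δ c : ℝ} (hδ0 : 0 < δ) (hδ1 : δ < 1) :
    IntegrableOn (fun u : ℝ => (u ^ (-δ) - 1) * Real.exp (-(c * u))) (Ioo 0 1) := by
  have h1 : IntegrableOn (fun u : ℝ => u ^ (-δ) * Real.exp (-(c * u))) (Ioo 0 1) := by
    refine aux_int_rpow_mul hδ0 hδ1 (Continuous.aestronglyMeasurable (by continuity))
      (C := Real.exp |c|) ?_
    filter_upwards [ae_restrict_mem measurableSet_Ioo] with u hu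
    rw [Real.norm_eq_abs, Real.abs_exp]
    refine Real.exp_le_exp.2 ((neg_le_abs _).trans ?_)
    rw [abs_mul]
    have h1 : |u| ≤ 1 := by rw [abs_of_pos hu.1]; exact hu.2.le
    nlinarith [abs_nonneg c]
  have h2 : IntegrableOn (fun u : ℝ => (1:ℝ) * Real.exp (-(c * u))) (Ioo 0 1) := by
    simpa using aux_exp_int c
  simpa [sub_mul, Pi.sub_def] using h1.sub h2


lemma aux_pointwise {δ : ℝ} (hδ0 : 0 < δ) (hδ1 : δ < 1) {c : ℝ} (hc : 0 < c) :
    c ^ δ * lowerGamma (1 - δ) c + Real.exp (-c) - 1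
      = c * ∫ u in Ioo (0:ℝ) 1, (u ^ (-δ) - 1) * Real.exp (-(c * u)) := by
  set I₁ : ℝ := ∫ u in Ioo (0:ℝ) 1, u ^ (-δ) * Real.exp (-(c * u)) with hI₁
  set I₂ : ℝ := ∫ u in Ioo (0:ℝ) 1, Real.exp (-(c * u)) with hI₂
  have h1 : IntegrableOn (fun u : ℝ => u ^ (-δ) * Real.exp (-(c * u))) (Ioo 0 1) := by
    refine aux_int_rpow_mul hδ0 hδ1 (Continuous.aestronglyMeasurable (by continuity))
      (C := Real.exp |c|) ?_
    filter_upwards [ae_restrict_mem measurableSet_Ioo] with u hu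
    rw [Real.norm_eq_abs, Real.abs_exp]
    refine Real.exp_le_exp.2 ((neg_le_abs _).trans ?_)
    rw [abs_mul]
    have hu1 : |u| ≤ 1 := by rw [abs_of_pos hu.1]; exact hu.2.le
    nlinarith [abs_nonneg c]
  -- Step A : lowerGamma
  have hcomp := intervalIntegral.integral_comp_mul_left
    (a := (0:ℝ)) (b := 1) (fun t => t ^ (-δ) * Real.exp (-t)) hc.ne'
  simp only [mul_zero, mul_one, smul_eq_mul] at hcomp
  have hA : lowerGamma (1 - δ) c = c * ∫ u in (0:ℝ)..1, (c * u) ^ (-δ) * Real.exp (-(c * u)) := by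
    rw [lowerGamma]
    have he : (1:ℝ) - δ - 1 = -δ := by ring
    rw [he, hcomp]
    field_simp
  have hA2 : (∫ u in (0:ℝ)..1, (c * u) ^ (-δ) * Real.exp (-(c * u))) = c ^ (-δ) * I₁ := by
    rw [intervalIntegral.integral_of_le zero_le_one, integral_Ioc_eq_integral_Ioo, hI₁,
      ← integral_const_mul]
    refine setIntegral_congr_fun measurableSet_Ioo (fun u hu => ?_)
    rw [Real.mul_rpow hc.le hu.1.le]; ring
  -- Step B : exponential part
  have hcomp2 := intervalIntegral.integral_comp_mul_left
    (a := (0:ℝ)) (b := 1) (fun t => Real.exp (-t)) hc.ne'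
  simp only [mul_zero, mul_one, smul_eq_mul] at hcomp2
  have hexp : (∫ t in (0:ℝ)..c, Real.exp (-t)) = 1 - Real.exp (-c) := by
    rw [intervalIntegral.integral_comp_neg (fun t => Real.exp t)]
    rw [integral_exp]; simp
  have hB : Real.exp (-c) - 1 = -(c * I₂) := by
    have : I₂ = ∫ u in (0:ℝ)..1, Real.exp (-(c * u)) := by
      rw [intervalIntegral.integral_of_le zero_le_one, integral_Ioc_eq_integral_Ioo]
    rw [this, hcomp2, hexp]
    field_simp
    ring
  -- Step C : combine
  have hRHS : (∫ u in Ioo (0:ℝ) 1, (u ^ (-δ) - 1) * Real.exp (-(c * u))) = I₁ - I₂ := by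
    rw [hI₁, hI₂, ← integral_sub h1 (aux_exp_int c)]
    refine setIntegral_congr_fun measurableSet_Ioo (fun u _ => ?_)
    ring
  have hpow : c ^ δ * c ^ (-δ) = 1 := by
    rw [← Real.rpow_add hc]; simp
  rw [hA, hA2, hRHS]
  linear_combination (c * I₁) * hpow + hB

lemma aux_x_integrable {s : ℝ} (hs : 0 < s) :
    Integrable (fun x : ℝ => s * x * Real.exp (-x)) (volume.restrict (Ioi 0)) := by
  have h := Real.GammaIntegral_convergent (by norm_num : (0:ℝ) < 2)
  have h2 : IntegrableOn (fun x : ℝ => x * Real.exp (-x)) (Ioi 0) := by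
    refine h.congr_fun (fun x hx => ?_) measurableSet_Ioi
    norm_num [Real.rpow_one]; ring
  exact (h2.const_mul s).congr (Filter.Eventually.of_forall fun x => by ring)

lemma aux_prod_int {δ s : ℝ} (hδ0 : 0 < δ) (hδ1 : δ < 1) (hs : 0 < s) :
    Integrable (Function.uncurry fun x u : ℝ =>
        Real.exp (-x) * (s * x) * ((u ^ (-δ) - 1) * Real.exp (-(s * x * u))))
      ((volume.restrict (Ioi 0)).prod (volume.restrict (Ioo 0 1))) := by
  have hmeas : Measurable (Function.uncurry fun x u : ℝ =>
      Real.exp (-x) * (s * x) * ((u ^ (-δ) - 1) * Real.exp (-(s * x * u)))) := by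
    unfold Function.uncurry; fun_prop
  have h_u : IntegrableOn (fun u : ℝ => u ^ (-δ)) (Ioo 0 1) :=
    (intervalIntegral.integrableOn_Ioo_rpow_iff one_pos).2 (by linarith)
  have hg : Integrable (fun p : ℝ × ℝ => (s * p.1 * Real.exp (-p.1)) * p.2 ^ (-δ))
      ((volume.restrict (Ioi 0)).prod (volume.restrict (Ioo 0 1))) :=
    (aux_x_integrable hs).mul_prod h_u
  refine hg.mono' hmeas.aestronglyMeasurable ?_
  rw [Measure.prod_restrict]
  filter_upwards [ae_restrict_mem (measurableSet_Ioi.prod measurableSet_Ioo)] with p hp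
  obtain ⟨hx, hu⟩ := hp
  simp only [Function.uncurry] at *
  have hx0 : (0:ℝ) < p.1 := hx
  have hu0 : (0:ℝ) < p.2 := hu.1
  have hu1 : p.2 < 1 := hu.2
  have h1u : 1 ≤ p.2 ^ (-δ) :=
    Real.one_le_rpow_of_pos_of_le_one_of_nonpos hu0 hu1.le (by linarith)
  have he1 : Real.exp (-(s * p.1 * p.2)) ≤ 1 := Real.exp_le_one_iff.2 (neg_nonpos.2 (by positivity))
  have he0 : (0:ℝ) < Real.exp (-(s * p.1 * p.2)) := Real.exp_pos _
  have hex : (0:ℝ) < Real.exp (-p.1) := Real.exp_pos _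
  have key : (p.2 ^ (-δ) - 1) * Real.exp (-(s * p.1 * p.2)) ≤ p.2 ^ (-δ) := by nlinarith
  have hkey0 : 0 ≤ (p.2 ^ (-δ) - 1) * Real.exp (-(s * p.1 * p.2)) :=
    mul_nonneg (by linarith) he0.le
  have hfac : 0 ≤ Real.exp (-p.1) * (s * p.1) := by positivity
  rw [Real.norm_eq_abs, abs_of_nonneg (mul_nonneg hfac hkey0)]
  nlinarith [mul_le_mul_of_nonneg_left key hfac]

lemma aux_inner {δ s : ℝ} (hs : 0 < s) {u : ℝ} (hu : u ∈ Ioo (0:ℝ) 1) :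
    (∫ x in Ioi (0:ℝ), Real.exp (-x) * (s * x) * ((u ^ (-δ) - 1) * Real.exp (-(s * x * u))))
      = s * ((u ^ (-δ) - 1) * (((1 + s * u) ^ 2)⁻¹)) := by
  have hr : 0 < 1 + s * u := by nlinarith [hu.1]
  have hgam := Real.integral_rpow_mul_exp_neg_mul_Ioi (a := 2) (by norm_num) hr
  have hgam2 : (∫ x in Ioi (0:ℝ), x * Real.exp (-((1 + s * u) * x))) = ((1 + s * u) ^ 2)⁻¹ := by
    have h1 : ((1:ℝ)/(1 + s * u)) ^ (2:ℝ) * Real.Gamma 2 = ((1 + s * u) ^ 2)⁻¹ := by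
      rw [(by simpa using Real.Gamma_nat_eq_factorial 1 : Real.Gamma 2 = 1),
        show (2:ℝ) = ((2:ℕ):ℝ) by norm_num, Real.rpow_natCast]
      simp [one_div, inv_pow]
    rw [← h1, ← hgam]
    refine setIntegral_congr_fun measurableSet_Ioi (fun x _ => ?_)
    norm_num [Real.rpow_one]
  calc (∫ x in Ioi (0:ℝ), Real.exp (-x) * (s * x) * ((u ^ (-δ) - 1) * Real.exp (-(s * x * u))))
      = ∫ x in Ioi (0:ℝ), (s * (u ^ (-δ) - 1)) * (x * Real.exp (-((1 + s * u) * x))) := by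
        refine setIntegral_congr_fun measurableSet_Ioi (fun x _ => ?_)
        rw [show -((1 + s * u) * x) = -x + -(s * x * u) by ring, Real.exp_add]
        ring
    _ = (s * (u ^ (-δ) - 1)) * ∫ x in Ioi (0:ℝ), x * Real.exp (-((1 + s * u) * x)) :=
        integral_const_mul _ _
    _ = s * ((u ^ (-δ) - 1) * (((1 + s * u) ^ 2)⁻¹)) := by rw [hgam2]; ring

lemma aux_W_int {δ s : ℝ} (hδ0 : 0 < δ) (hδ1 : δ < 1) (hs : 0 < s) :
    IntegrableOn (fun u : ℝ => u ^ (-δ) * (1 + s * u)⁻¹) (Ioo 0 1) := by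
  refine aux_int_rpow_mul hδ0 hδ1
    (((measurable_const.add (measurable_id.const_mul s)).inv).aestronglyMeasurable) (C := 1) ?_
  filter_upwards [ae_restrict_mem measurableSet_Ioo] with u hu
  have hr : (1:ℝ) ≤ 1 + s * u := by nlinarith [hu.1]
  rw [Real.norm_eq_abs, abs_of_nonneg (by positivity)]
  rw [inv_le_one_iff₀]; right; exact hr

lemma aux_psi_int {s : ℝ} (hs : 0 < s) :
    IntegrableOn (fun u : ℝ => ((1 + s * u) ^ 2)⁻¹) (Ioo 0 1) := by
  have hcont : ContinuousOn (fun u : ℝ => ((1 + s * u) ^ 2)⁻¹) (Icc 0 1) := by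
    refine ContinuousOn.inv₀ (by fun_prop) (fun u hu => ?_)
    have : (0:ℝ) < 1 + s * u := by nlinarith [hu.1]
    positivity
  exact (hcont.integrableOn_Icc).mono_set Ioo_subset_Icc_self

lemma aux_V_int {δ s : ℝ} (hδ0 : 0 < δ) (hδ1 : δ < 1) (hs : 0 < s) :
    IntegrableOn (fun u : ℝ => (u ^ (-δ) - 1) * ((1 + s * u) ^ 2)⁻¹) (Ioo 0 1) := by
  have h1 : IntegrableOn (fun u : ℝ => u ^ (-δ) * ((1 + s * u) ^ 2)⁻¹) (Ioo 0 1) := by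
    refine aux_int_rpow_mul hδ0 hδ1
      ((((measurable_const.add (measurable_id.const_mul s)).pow_const 2).inv).aestronglyMeasurable)
      (C := 1) ?_
    filter_upwards [ae_restrict_mem measurableSet_Ioo] with u hu
    have hr : (1:ℝ) ≤ 1 + s * u := by nlinarith [hu.1]
    rw [Real.norm_eq_abs, abs_of_nonneg (by positivity), inv_le_one_iff₀]
    right; nlinarith
  have := h1.sub (aux_psi_int hs)
  exact this.congr (Filter.Eventually.of_forall fun u => by simp [Pi.sub_apply]; ring)

lemma aux_P3 {δ s : ℝ} (hδ0 : 0 < δ) (hδ1 : δ < 1) (hs : 0 < s) :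
    (∫ u in Ioo (0:ℝ) 1, (u ^ (-δ) - 1) * ((1 + s * u) ^ 2)⁻¹)
      = δ * ∫ u in Ioo (0:ℝ) 1, u ^ (-δ) * (1 + s * u)⁻¹ := by
  set H : ℝ → ℝ := fun v => (v ^ (1 - δ) - v) * (1 + s * v)⁻¹ with hH
  set g : ℝ → ℝ := fun u =>
    (u ^ (-δ) - 1) * ((1 + s * u) ^ 2)⁻¹ - δ * (u ^ (-δ) * (1 + s * u)⁻¹) with hg
  have hV := aux_V_int hδ0 hδ1 hs
  have hW := aux_W_int hδ0 hδ1 hs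
  have hg_int : IntegrableOn g (Ioo 0 1) := hV.sub (hW.const_mul δ)
  have hderiv : ∀ u ∈ Ioo (0:ℝ) 1, HasDerivAt H (g u) u := by
    intro u hu
    have hu0 : (0:ℝ) < u := hu.1
    have hr : (0:ℝ) < 1 + s * u := by nlinarith
    have h₁ : HasDerivAt (fun v : ℝ => v ^ (1 - δ)) ((1 - δ) * u ^ (1 - δ - 1)) u :=
      Real.hasDerivAt_rpow_const (Or.inl hu0.ne')
    have h₂ : HasDerivAt (fun v : ℝ => v ^ (1 - δ) - v) ((1 - δ) * u ^ (1 - δ - 1) - 1) u :=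
      h₁.sub (hasDerivAt_id u)
    have h₃ : HasDerivAt (fun v : ℝ => 1 + s * v) s u := by
      simpa using ((hasDerivAt_id u).const_mul s).const_add 1
    have h₄ := h₃.inv hr.ne'
    have h₅ := h₂.mul h₄
    refine h₅.congr_deriv ?_
    have e1 : (1:ℝ) - δ - 1 = -δ := by ring
    have e2 : u ^ ((1:ℝ) - δ) = u * u ^ (-δ) := by
      rw [show (1:ℝ) - δ = 1 + (-δ) by ring, Real.rpow_add hu0, Real.rpow_one]
    rw [hg, e1, e2]
    simp only [Pi.inv_apply]
    field_simp
    ring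
  have hcont : ContinuousOn H (Icc 0 1) := by
    have hc1 : ContinuousOn (fun v : ℝ => v ^ ((1:ℝ) - δ)) (Icc 0 1) := fun v _ =>
      (Real.continuousAt_rpow_const v (1 - δ) (Or.inr (by linarith))).continuousWithinAt
    refine (hc1.sub continuousOn_id).mul (ContinuousOn.inv₀ (by fun_prop) fun v hv => ?_)
    have : (0:ℝ) < 1 + s * v := by nlinarith [hv.1]
    exact this.ne'
  have hftc : (∫ u in (0:ℝ)..1, g u) = H 1 - H 0 := by
    refine intervalIntegral.integral_eq_sub_of_hasDeriv_right_of_le zero_le_one hcont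
      (fun u hu => (hderiv u hu).hasDerivWithinAt) ?_
    rw [intervalIntegrable_iff_integrableOn_Ioo_of_le zero_le_one]
    exact hg_int
  have hH1 : H 1 = 0 := by simp [hH]
  have hH0 : H 0 = 0 := by
    simp [hH, Real.zero_rpow (by intro h; rw [sub_eq_zero] at h; exact absurd h.symm (by linarith) : (1:ℝ) - δ ≠ 0)]
  have hzero : (∫ u in Ioo (0:ℝ) 1, g u) = 0 := by
    rw [← integral_Ioc_eq_integral_Ioo, ← intervalIntegral.integral_of_le zero_le_one,
      hftc, hH1, hH0, sub_zero]
  rw [← sub_eq_zero]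
  have hsplit : (∫ u in Ioo (0:ℝ) 1, g u)
      = (∫ u in Ioo (0:ℝ) 1, (u ^ (-δ) - 1) * ((1 + s * u) ^ 2)⁻¹)
        - δ * ∫ u in Ioo (0:ℝ) 1, u ^ (-δ) * (1 + s * u)⁻¹ := by
    rw [hg, integral_sub hV (hW.const_mul δ), integral_const_mul]
  rw [← hsplit, hzero]
/-- For `δ ∈ (0,1)` and `s > 0`,
`∫_0^∞ e^{−x} ( (sx)^δ γ(1−δ, sx) + e^{−sx} − 1 ) dx = s δ ∫_0^1 t^{−δ} (1+st)^{−1} dt`,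
and in particular both integrals converge. -/
theorem stmt_1 (δ s : ℝ) (hδ : δ ∈ Set.Ioo (0:ℝ) 1) (hs : 0 < s) :
    IntegrableOn (fun x : ℝ =>
        Real.exp (-x) * ((s * x) ^ δ * lowerGamma (1 - δ) (s * x) + Real.exp (-(s * x)) - 1))
      (Set.Ioi 0) ∧
    IntegrableOn (fun t : ℝ => t ^ (-δ) * (1 + s * t)⁻¹) (Set.Ioo 0 1) ∧
    ∫ x in Set.Ioi 0,
        Real.exp (-x) * ((s * x) ^ δ * lowerGamma (1 - δ) (s * x) + Real.exp (-(s * x)) - 1)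
      = s * δ * ∫ t in Set.Ioo (0:ℝ) 1, t ^ (-δ) * (1 + s * t)⁻¹ := by
  obtain ⟨hδ0, hδ1⟩ := hδ
  have hprod := aux_prod_int hδ0 hδ1 hs
  have hpt : ∀ x ∈ Ioi (0:ℝ),
      Real.exp (-x) * ((s * x) ^ δ * lowerGamma (1 - δ) (s * x) + Real.exp (-(s * x)) - 1)
        = ∫ u in Ioo (0:ℝ) 1,
            Real.exp (-x) * (s * x) * ((u ^ (-δ) - 1) * Real.exp (-(s * x * u))) := by
    intro x hx
    have hc : 0 < s * x := mul_pos hs hx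
    rw [aux_pointwise hδ0 hδ1 hc, ← mul_assoc, ← integral_const_mul]
  have hIL := hprod.integral_prod_left
  have hInt1 : IntegrableOn (fun x : ℝ =>
      Real.exp (-x) * ((s * x) ^ δ * lowerGamma (1 - δ) (s * x) + Real.exp (-(s * x)) - 1))
      (Ioi 0) := by
    refine hIL.congr ?_
    filter_upwards [ae_restrict_mem measurableSet_Ioi] with x hx
    exact (hpt x hx).symm
  refine ⟨hInt1, aux_W_int hδ0 hδ1 hs, ?_⟩
  have hswap := integral_integral_swap
    (f := fun x u : ℝ => Real.exp (-x) * (s * x) * ((u ^ (-δ) - 1) * Real.exp (-(s * x * u))))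
    hprod
  calc (∫ x in Ioi (0:ℝ),
        Real.exp (-x) * ((s * x) ^ δ * lowerGamma (1 - δ) (s * x) + Real.exp (-(s * x)) - 1))
      = ∫ x in Ioi (0:ℝ), ∫ u in Ioo (0:ℝ) 1,
          Real.exp (-x) * (s * x) * ((u ^ (-δ) - 1) * Real.exp (-(s * x * u))) :=
        setIntegral_congr_fun measurableSet_Ioi hpt
    _ = ∫ u in Ioo (0:ℝ) 1, ∫ x in Ioi (0:ℝ),
          Real.exp (-x) * (s * x) * ((u ^ (-δ) - 1) * Real.exp (-(s * x * u))) := hswap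
    _ = ∫ u in Ioo (0:ℝ) 1, s * ((u ^ (-δ) - 1) * (((1 + s * u) ^ 2)⁻¹)) :=
        setIntegral_congr_fun measurableSet_Ioo (fun u hu => aux_inner hs hu)
    _ = s * ∫ u in Ioo (0:ℝ) 1, (u ^ (-δ) - 1) * ((1 + s * u) ^ 2)⁻¹ := integral_const_mul _ _
    _ = s * (δ * ∫ u in Ioo (0:ℝ) 1, u ^ (-δ) * (1 + s * u)⁻¹) := by
        rw [aux_P3 hδ0 hδ1 hs]
    _ = s * δ * ∫ t in Ioo (0:ℝ) 1, t ^ (-δ) * (1 + s * t)⁻¹ := by ring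
end

section
/- For every δ ∈ (0,1), every real s > 0 and every positive integer m, (1/Γ(m)) ∫_0^∞ x^{m−1} e^{−x} ( e^{−sx} + (sx)^δ γ(1−δ, sx) ) dx = (1+s)^{−m} + m s^δ ∫_{1/(1+s)}^1 y^{m+δ−1} (1−y)^{−δ} dy, where γ(a,z) := ∫_0^z t^{a−1} e^{−t} dt is the lower incomplete gamma function and Γ is the Gamma function; in particular both sides are finite. -/
set_option maxHeartbeats 1000000

open MeasureTheory Real Set

lemma aux_gamma_int {a c : ℝ} (ha : 0 < a) (hc : 0 < c) :
    IntegrableOn (fun x : ℝ => x ^ (a - 1) * Real.exp (-(c * x))) (Set.Ioi 0) := by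
  have h0 : IntegrableOn (fun t : ℝ => t ^ (a - 1) * Real.exp (-t)) (Set.Ioi 0) := by
    have := Real.GammaIntegral_convergent ha
    simpa [mul_comm] using this
  have h : IntegrableOn (fun x : ℝ => (c * x) ^ (a - 1) * Real.exp (-(c * x))) (Set.Ioi 0) := by
    have := (integrableOn_Ioi_comp_mul_left_iff
      (fun t : ℝ => t ^ (a - 1) * Real.exp (-t)) 0 hc).mpr (by simpa using h0)
    simpa using this
  have h2 : IntegrableOn
      (fun x : ℝ => c ^ (1 - a) * ((c * x) ^ (a - 1) * Real.exp (-(c * x)))) (Set.Ioi 0) :=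
    h.const_mul (c ^ (1 - a))
  refine h2.congr_fun (fun x hx => ?_) measurableSet_Ioi
  have hx0 : (0:ℝ) < x := hx
  beta_reduce
  rw [Real.mul_rpow hc.le hx0.le, ← mul_assoc, ← mul_assoc, ← Real.rpow_add hc]
  norm_num

lemma aux_u_int {δ : ℝ} (hδ1 : δ < 1) {g : ℝ → ℝ} (hg : Measurable g)
    (hbd : ∀ u ∈ Set.Ioc (0:ℝ) 1, |g u| ≤ 1) :
    IntegrableOn (fun u => u ^ (-δ) * g u) (Set.Ioc 0 1) := by
  have h0 : IntegrableOn (fun u : ℝ => u ^ (-δ)) (Set.Ioc 0 1) :=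
    (intervalIntegral.intervalIntegrable_rpow' (by linarith : (-1:ℝ) < -δ) (a:=0) (b:=1)).1
  refine h0.mono' ?_ ?_
  · exact (((by measurability : Measurable (fun u : ℝ => u ^ (-δ))).mul hg)).aestronglyMeasurable
  · rw [ae_restrict_iff' measurableSet_Ioc]
    filter_upwards with u hu
    have hu0 : (0:ℝ) < u := hu.1
    have : ‖u ^ (-δ) * g u‖ = u ^ (-δ) * |g u| := by
      rw [norm_mul, Real.norm_eq_abs, Real.norm_eq_abs,
        abs_of_nonneg (Real.rpow_nonneg hu0.le _)]
    rw [this]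
    calc u ^ (-δ) * |g u| ≤ u ^ (-δ) * 1 :=
          mul_le_mul_of_nonneg_left (hbd u hu) (Real.rpow_nonneg hu0.le _)
      _ = u ^ (-δ) := mul_one _

lemma aux_lg {δ z : ℝ} (hz : 0 < z) :
    z ^ δ * lowerGamma (1 - δ) z
      = z * ∫ u in Set.Ioc (0:ℝ) 1, u ^ (-δ) * Real.exp (-(z * u)) := by
  have h1 : lowerGamma (1 - δ) z = ∫ t in (0:ℝ)..z, t ^ (-δ) * Real.exp (-t) := by
    unfold lowerGamma
    norm_num [show (1 - δ) - 1 = -δ by ring]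
  have h2 : ∫ u in (0:ℝ)..1, (z * u) ^ (-δ) * Real.exp (-(z * u))
      = z⁻¹ • ∫ t in (0:ℝ)..z, t ^ (-δ) * Real.exp (-t) := by
    simpa using intervalIntegral.integral_comp_mul_left
      (fun t : ℝ => t ^ (-δ) * Real.exp (-t)) hz.ne' (a := 0) (b := 1)
  have h3 : ∫ u in (0:ℝ)..1, (z * u) ^ (-δ) * Real.exp (-(z * u))
      = z ^ (-δ) * ∫ u in (0:ℝ)..1, u ^ (-δ) * Real.exp (-(z * u)) := by
    rw [← intervalIntegral.integral_const_mul]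
    apply intervalIntegral.integral_congr
    intro u hu
    have hu0 : 0 ≤ u := by
      rcases hu with ⟨h, _⟩
      exact (le_of_eq (by norm_num : (0:ℝ) = min 0 1)).trans h
    simp only []
    rw [Real.mul_rpow hz.le hu0]; ring
  have h4 : ∫ u in (0:ℝ)..1, u ^ (-δ) * Real.exp (-(z * u))
      = ∫ u in Set.Ioc (0:ℝ) 1, u ^ (-δ) * Real.exp (-(z * u)) :=
    intervalIntegral.integral_of_le zero_le_one
  rw [← h4, h1]
  have := h2.symm.trans h3
  rw [smul_eq_mul] at this
  have hgamma : ∫ t in (0:ℝ)..z, t ^ (-δ) * Real.exp (-t)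
      = z * (z ^ (-δ) * ∫ u in (0:ℝ)..1, u ^ (-δ) * Real.exp (-(z * u))) := by
    rw [← this]; field_simp
  rw [hgamma, ← mul_assoc, ← mul_assoc, mul_comm (z ^ δ) z, mul_assoc z,
    ← Real.rpow_add hz]
  norm_num

lemma aux_fubini {δ s : ℝ} (m : ℕ) (hδ0 : 0 < δ) (hδ1 : δ < 1) (hs : 0 < s) :
    IntegrableOn (fun x : ℝ => ∫ u in Set.Ioc (0:ℝ) 1,
        x ^ (m:ℝ) * Real.exp (-x) * (u ^ (-δ) * Real.exp (-(s * x * u)))) (Set.Ioi 0) ∧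
    (∫ x in Set.Ioi 0, ∫ u in Set.Ioc (0:ℝ) 1,
        x ^ (m:ℝ) * Real.exp (-x) * (u ^ (-δ) * Real.exp (-(s * x * u))))
      = Real.Gamma ((m:ℝ) + 1) *
          ∫ u in Set.Ioc (0:ℝ) 1, u ^ (-δ) * (1 + s * u) ^ (-((m:ℝ) + 1)) := by
  set μ := volume.restrict (Set.Ioi (0:ℝ)) with hμ
  set ν := volume.restrict (Set.Ioc (0:ℝ) 1) with hν
  set F : ℝ × ℝ → ℝ := fun p =>
    p.1 ^ (m:ℝ) * Real.exp (-p.1) * (p.2 ^ (-δ) * Real.exp (-(s * p.1 * p.2))) with hF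
  have hmeas : Measurable F := by measurability
  have hFm : AEStronglyMeasurable F (μ.prod ν) := hmeas.aestronglyMeasurable
  have h0 : IntegrableOn (fun u : ℝ => u ^ (-δ)) (Set.Ioc 0 1) :=
    (intervalIntegral.intervalIntegrable_rpow' (by linarith : (-1:ℝ) < -δ) (a:=0) (b:=1)).1
  have hint_u : ∀ x ∈ Set.Ioi (0:ℝ), Integrable (fun u => F (x, u)) ν := by
    intro x hx
    have hx0 : (0:ℝ) < x := hx
    have : IntegrableOn (fun u : ℝ => u ^ (-δ) * Real.exp (-(s * x * u))) (Set.Ioc 0 1) := by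
      refine aux_u_int hδ1 (Continuous.measurable (by continuity)) (fun u hu => ?_)
      have hu0 : (0:ℝ) ≤ u := hu.1.le
      rw [abs_of_pos (Real.exp_pos _), Real.exp_le_one_iff]
      have : 0 ≤ s * x * u := by positivity
      linarith
    have h2 := this.const_mul (x ^ (m:ℝ) * Real.exp (-x))
    refine MeasureTheory.IntegrableOn.congr_fun h2 (fun u hu => ?_) measurableSet_Ioc
    simp only [hF]
    all_goals ring
  have hC0 : 0 ≤ ∫ u in Set.Ioc (0:ℝ) 1, u ^ (-δ) :=
    setIntegral_nonneg measurableSet_Ioc (fun u hu => Real.rpow_nonneg hu.1.le _)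
  have hnorm_int : Integrable (fun x => ∫ u, ‖F (x, u)‖ ∂ν) μ := by
    set C := ∫ u in Set.Ioc (0:ℝ) 1, u ^ (-δ) with hCdef
    have hbase : IntegrableOn
        (fun x : ℝ => x ^ (((m:ℝ) + 1) - 1) * Real.exp (-(1 * x)) * C) (Set.Ioi 0) :=
      (aux_gamma_int (by positivity) one_pos).mul_const C
    refine hbase.mono' (hFm.norm.integral_prod_right') ?_
    filter_upwards [ae_restrict_mem measurableSet_Ioi] with x hx
    have hx0 : (0:ℝ) < x := hx
    have key : ∫ u, ‖F (x, u)‖ ∂ν ≤ x ^ (m:ℝ) * Real.exp (-x) * C := by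
      have heq : ∫ u, ‖F (x, u)‖ ∂ν
          = x ^ (m:ℝ) * Real.exp (-x) *
            ∫ u in Set.Ioc (0:ℝ) 1, u ^ (-δ) * Real.exp (-(s * x * u)) := by
        rw [hν, ← integral_const_mul]
        refine setIntegral_congr_fun measurableSet_Ioc (fun u hu => ?_)
        have hu0 : (0:ℝ) < u := hu.1
        have : ‖F (x, u)‖ = F (x, u) := by
          rw [Real.norm_eq_abs, abs_of_nonneg]
          have := Real.rpow_nonneg hx0.le (m:ℝ)
          have := Real.rpow_nonneg hu0.le (-δ)
          positivity
        rw [this, hF]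
      rw [heq]
      have hmono : ∫ u in Set.Ioc (0:ℝ) 1, u ^ (-δ) * Real.exp (-(s * x * u)) ≤ C := by
        rw [hCdef]
        refine setIntegral_mono_on ?_ h0 measurableSet_Ioc (fun u hu => ?_)
        · refine aux_u_int hδ1 (Continuous.measurable (by continuity)) (fun u hu => ?_)
          have hu0 : (0:ℝ) ≤ u := hu.1.le
          rw [abs_of_pos (Real.exp_pos _), Real.exp_le_one_iff]
          have : 0 ≤ s * x * u := by positivity
          linarith
        · have hu0 : (0:ℝ) < u := hu.1
          calc u ^ (-δ) * Real.exp (-(s * x * u)) ≤ u ^ (-δ) * 1 := by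
                refine mul_le_mul_of_nonneg_left ?_ (Real.rpow_nonneg hu0.le _)
                rw [Real.exp_le_one_iff]
                have : 0 ≤ s * x * u := by positivity
                linarith
            _ = u ^ (-δ) := mul_one _
      have hfac : 0 ≤ x ^ (m:ℝ) * Real.exp (-x) := by positivity
      exact mul_le_mul_of_nonneg_left hmono hfac
    have hnn : 0 ≤ ∫ u, ‖F (x, u)‖ ∂ν := integral_nonneg fun u => norm_nonneg _
    rw [Real.norm_eq_abs, abs_of_nonneg hnn]
    calc ∫ u, ‖F (x, u)‖ ∂ν ≤ x ^ (m:ℝ) * Real.exp (-x) * C := key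
      _ = x ^ (((m:ℝ) + 1) - 1) * Real.exp (-(1 * x)) * C := by norm_num
  have hprod : Integrable F (μ.prod ν) := by
    refine (integrable_prod_iff hFm).mpr ⟨?_, hnorm_int⟩
    filter_upwards [ae_restrict_mem measurableSet_Ioi] with x hx using hint_u x hx
  constructor
  · exact hprod.integral_prod_left
  · have hswap := integral_integral_swap (f := fun x u => F (x, u)) (μ := μ) (ν := ν)
      (by exact hprod)
    rw [hμ, hν] at hswap
    rw [hswap]
    have hinner : ∀ u ∈ Set.Ioc (0:ℝ) 1,
        (∫ x in Set.Ioi (0:ℝ), F (x, u))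
          = u ^ (-δ) * (1 + s * u) ^ (-((m:ℝ) + 1)) * Real.Gamma ((m:ℝ) + 1) := by
      intro u hu
      have hu0 : (0:ℝ) < u := hu.1
      have hc : (0:ℝ) < 1 + s * u := by positivity
      have hptwise : ∀ x : ℝ, F (x, u)
          = u ^ (-δ) * (x ^ (((m:ℝ) + 1) - 1) * Real.exp (-((1 + s * u) * x))) := by
        intro x
        rw [hF]
        have : Real.exp (-x) * Real.exp (-(s * x * u)) = Real.exp (-((1 + s * u) * x)) := by
          rw [← Real.exp_add]; ring_nf
        have h2 : x ^ (m:ℝ) = x ^ (((m:ℝ) + 1) - 1) := by norm_num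
        calc x ^ (m:ℝ) * Real.exp (-x) * (u ^ (-δ) * Real.exp (-(s * x * u)))
            = u ^ (-δ) * (x ^ (m:ℝ) * (Real.exp (-x) * Real.exp (-(s * x * u)))) := by ring
          _ = u ^ (-δ) * (x ^ (((m:ℝ) + 1) - 1) * Real.exp (-((1 + s * u) * x))) := by
              rw [this, h2]
      rw [show (fun x => F (x, u)) = (fun x : ℝ =>
          u ^ (-δ) * (x ^ (((m:ℝ) + 1) - 1) * Real.exp (-((1 + s * u) * x)))) from
          funext hptwise]
      rw [integral_const_mul, Real.integral_rpow_mul_exp_neg_mul_Ioi (by positivity) hc]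
      have : (1 / (1 + s * u)) ^ ((m:ℝ) + 1) = (1 + s * u) ^ (-((m:ℝ) + 1)) := by
        rw [one_div, ← Real.rpow_neg_one, ← Real.rpow_mul hc.le]
        norm_num
      rw [this]; ring
    rw [setIntegral_congr_fun measurableSet_Ioc hinner, integral_mul_const]
    ring

lemma aux_calc {δ s : ℝ} (m : ℕ) (hs : 0 < s) {u : ℝ} (hu0 : 0 < u) :
    |(-s / (1 + s * u) ^ 2)| •
        (((1 + s * u)⁻¹) ^ ((m:ℝ) + δ - 1) * ((1 - (1 + s * u)⁻¹) ^ (-δ)))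
      = s ^ (1 - δ) * (u ^ (-δ) * (1 + s * u) ^ (-((m:ℝ) + 1))) := by
  have hc : (0:ℝ) < 1 + s * u := by positivity
  have h1 : (1:ℝ) - (1 + s * u)⁻¹ = (s * u) / (1 + s * u) := by
    field_simp
    ring
  have e1 : ((1 + s * u)⁻¹) ^ ((m:ℝ) + δ - 1) = (1 + s * u) ^ (-((m:ℝ) + δ - 1)) := by
    rw [← Real.rpow_neg_one (1 + s * u), ← Real.rpow_mul hc.le]
    ring_nf
  have e2 : (1 - (1 + s * u)⁻¹) ^ (-δ)
      = (s ^ (-δ) * u ^ (-δ)) * ((1 + s * u) ^ (-δ))⁻¹ := by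
    rw [h1, Real.div_rpow (by positivity) hc.le, Real.mul_rpow hs.le hu0.le]
    ring
  have e4 : |(-s / (1 + s * u) ^ 2)| = s * ((1 + s * u) ^ ((2:ℕ):ℝ))⁻¹ := by
    rw [abs_div, abs_neg, abs_of_pos hs, abs_of_pos (by positivity : (0:ℝ) < (1 + s * u) ^ 2),
      Real.rpow_natCast, div_eq_mul_inv]
  rw [smul_eq_mul, e4, e1, e2]
  rw [show ((1 + s * u) ^ ((2:ℕ):ℝ))⁻¹ = (1 + s * u) ^ (-((2:ℕ):ℝ)) from
    (Real.rpow_neg hc.le _).symm]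
  rw [show ((1 + s * u) ^ (-δ))⁻¹ = (1 + s * u) ^ (δ) from by
    rw [← Real.rpow_neg hc.le, neg_neg]]
  rw [show s * (1 + s * u) ^ (-((2:ℕ):ℝ)) *
      ((1 + s * u) ^ (-((m:ℝ) + δ - 1)) * (s ^ (-δ) * u ^ (-δ) * (1 + s * u) ^ δ))
    = (s ^ (1:ℝ) * s ^ (-δ)) * u ^ (-δ) *
      ((1 + s * u) ^ (-((2:ℕ):ℝ)) * (1 + s * u) ^ (-((m:ℝ) + δ - 1)) * (1 + s * u) ^ δ) from by
    rw [Real.rpow_one]; ring]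
  rw [← Real.rpow_add hs, ← Real.rpow_add hc, ← Real.rpow_add hc]
  norm_num
  ring_nf

lemma aux_sub {δ s : ℝ} (m : ℕ) (hδ0 : 0 < δ) (hδ1 : δ < 1) (hs : 0 < s) :
    IntegrableOn (fun y : ℝ => y ^ ((m:ℝ) + δ - 1) * (1 - y) ^ (-δ))
      (Set.Ioo (1 / (1 + s)) 1) ∧
    (∫ y in Set.Ioo (1 / (1 + s)) 1, y ^ ((m:ℝ) + δ - 1) * (1 - y) ^ (-δ))
      = s ^ (1 - δ) * ∫ u in Set.Ioc (0:ℝ) 1, u ^ (-δ) * (1 + s * u) ^ (-((m:ℝ) + 1)) := by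
  have hs1 : (0:ℝ) < 1 + s := by linarith
  set g : ℝ → ℝ := fun u => (1 + s * u)⁻¹ with hg
  set g' : ℝ → ℝ := fun u => -s / (1 + s * u) ^ 2 with hg'
  have hderiv : ∀ u ∈ Set.Ioo (0:ℝ) 1, HasDerivWithinAt g (g' u) (Set.Ioo (0:ℝ) 1) u := by
    intro u hu
    have hc : (0:ℝ) < 1 + s * u := by have := hu.1; positivity
    have h1 : HasDerivAt (fun v : ℝ => 1 + s * v) s u := by
      simpa using ((hasDerivAt_id u).const_mul s).const_add 1
    have h2 := h1.inv hc.ne'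
    exact h2.hasDerivWithinAt
  have hinj : Set.InjOn g (Set.Ioo (0:ℝ) 1) := by
    intro u hu v hv h
    have h' : 1 + s * u = 1 + s * v := by
      have := inv_inj.mp h
      exact this
    have : s * u = s * v := by linarith
    exact mul_left_cancel₀ hs.ne' this
  have himg : g '' Set.Ioo (0:ℝ) 1 = Set.Ioo (1 / (1 + s)) 1 := by
    ext y
    constructor
    · rintro ⟨u, ⟨hu0, hu1⟩, rfl⟩
      have hc : (0:ℝ) < 1 + s * u := by positivity
      constructor
      · rw [one_div]
        apply inv_strictAnti₀ hc
        nlinarith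
      · have h1 : (1:ℝ) < 1 + s * u := by nlinarith
        exact inv_lt_one_of_one_lt₀ h1
    · rintro ⟨hy1, hy2⟩
      have hy0 : (0:ℝ) < y := lt_trans (by positivity) hy1
      refine ⟨(1 - y) / (s * y), ⟨?_, ?_⟩, ?_⟩
      · apply div_pos (by linarith) (by positivity)
      · rw [div_lt_one (by positivity)]
        have := (div_lt_iff₀ hs1).mp hy1
        nlinarith
      · have hne : 1 + s * ((1 - y) / (s * y)) = 1 / y := by
          field_simp
          ring
        show (1 + s * ((1 - y) / (s * y)))⁻¹ = y
        rw [hne, one_div, inv_inv]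
  have hcalc : ∀ u ∈ Set.Ioo (0:ℝ) 1,
      |g' u| • ((g u) ^ ((m:ℝ) + δ - 1) * ((1 - g u) ^ (-δ)))
        = s ^ (1 - δ) * (u ^ (-δ) * (1 + s * u) ^ (-((m:ℝ) + 1))) := by
    intro u hu
    exact aux_calc m hs hu.1
  have hintu : IntegrableOn
      (fun u : ℝ => s ^ (1 - δ) * (u ^ (-δ) * (1 + s * u) ^ (-((m:ℝ) + 1))))
      (Set.Ioo (0:ℝ) 1) := by
    have h1 : IntegrableOn (fun u : ℝ => u ^ (-δ) * (1 + s * u) ^ (-((m:ℝ) + 1)))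
        (Set.Ioc (0:ℝ) 1) := by
      refine aux_u_int hδ1
        (((measurable_id.const_mul s).const_add 1).pow measurable_const) (fun u hu => ?_)
      have hc : (1:ℝ) ≤ 1 + s * u := by nlinarith [hu.1, hu.2]
      rw [abs_of_nonneg (Real.rpow_nonneg (by linarith) _)]
      have hmn : -((m:ℝ) + 1) ≤ 0 := by
        have : (0:ℝ) ≤ (m:ℝ) := Nat.cast_nonneg m
        linarith
      exact Real.rpow_le_one_of_one_le_of_nonpos hc hmn
    exact ((h1.mono_set Set.Ioo_subset_Ioc_self).const_mul _)
  constructor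
  · rw [← himg]
    rw [integrableOn_image_iff_integrableOn_abs_deriv_smul measurableSet_Ioo hderiv hinj]
    exact hintu.congr_fun (fun u hu => (hcalc u hu).symm) measurableSet_Ioo
  · have key := integral_image_eq_integral_abs_deriv_smul measurableSet_Ioo hderiv hinj
      (fun y : ℝ => y ^ ((m:ℝ) + δ - 1) * (1 - y) ^ (-δ))
    rw [himg] at key
    rw [key, setIntegral_congr_fun measurableSet_Ioo hcalc, integral_const_mul,
      ← integral_Ioc_eq_integral_Ioo]

/-- For `δ ∈ (0,1)`, `s > 0` and a positive integer `m`,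
`(1/Γ(m)) ∫_0^∞ x^{m−1} e^{−x} ( e^{−sx} + (sx)^δ γ(1−δ, sx) ) dx
   = (1+s)^{−m} + m s^δ ∫_{1/(1+s)}^1 y^{m+δ−1} (1−y)^{−δ} dy`,
and in particular both sides are finite (the defining integrals converge). -/
theorem stmt_2 (δ s : ℝ) (m : ℕ) (hδ : δ ∈ Set.Ioo (0:ℝ) 1) (hs : 0 < s) (hm : 0 < m) :
    IntegrableOn (fun x : ℝ =>
        x ^ ((m : ℝ) - 1) * Real.exp (-x) *
          (Real.exp (-(s * x)) + (s * x) ^ δ * lowerGamma (1 - δ) (s * x)))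
      (Set.Ioi 0) ∧
    IntegrableOn (fun y : ℝ => y ^ ((m : ℝ) + δ - 1) * (1 - y) ^ (-δ))
      (Set.Ioo (1 / (1 + s)) 1) ∧
    (1 / Real.Gamma m) *
        ∫ x in Set.Ioi 0,
          x ^ ((m : ℝ) - 1) * Real.exp (-x) *
            (Real.exp (-(s * x)) + (s * x) ^ δ * lowerGamma (1 - δ) (s * x))
      = (1 + s) ^ (-(m : ℝ)) +
          m * s ^ δ *
            ∫ y in Set.Ioo (1 / (1 + s)) 1, y ^ ((m : ℝ) + δ - 1) * (1 - y) ^ (-δ) := by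
  obtain ⟨hδ0, hδ1⟩ := hδ
  have hm0 : (0:ℝ) < (m:ℝ) := by exact_mod_cast hm
  have hs1 : (0:ℝ) < 1 + s := by linarith
  have hΓ : (0:ℝ) < Real.Gamma m := Real.Gamma_pos_of_pos hm0
  obtain ⟨hFubInt, hFubEq⟩ := aux_fubini (δ := δ) (s := s) m hδ0 hδ1 hs
  obtain ⟨hSubInt, hSubEq⟩ := aux_sub (δ := δ) (s := s) m hδ0 hδ1 hs
  -- the pointwise identity on `Ioi 0`
  have hEq : Set.EqOn
      (fun x : ℝ => x ^ ((m : ℝ) - 1) * Real.exp (-x) *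
        (Real.exp (-(s * x)) + (s * x) ^ δ * lowerGamma (1 - δ) (s * x)))
      (fun x : ℝ => x ^ ((m : ℝ) - 1) * Real.exp (-((1 + s) * x)) +
        s * ∫ u in Set.Ioc (0:ℝ) 1,
          x ^ (m:ℝ) * Real.exp (-x) * (u ^ (-δ) * Real.exp (-(s * x * u))))
      (Set.Ioi 0) := by
    intro x hx
    have hx0 : (0:ℝ) < x := hx
    have hz : (0:ℝ) < s * x := by positivity
    simp only []
    rw [aux_lg (δ := δ) hz]
    have hJ : ∫ u in Set.Ioc (0:ℝ) 1,
          x ^ (m:ℝ) * Real.exp (-x) * (u ^ (-δ) * Real.exp (-(s * x * u)))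
        = x ^ (m:ℝ) * Real.exp (-x) *
          ∫ u in Set.Ioc (0:ℝ) 1, u ^ (-δ) * Real.exp (-(s * x * u)) := by
      rw [← integral_const_mul]
    rw [hJ]
    have hexp : Real.exp (-x) * Real.exp (-(s * x)) = Real.exp (-((1 + s) * x)) := by
      rw [← Real.exp_add]; ring_nf
    have hpow : x ^ ((m:ℝ) - 1) * x = x ^ (m:ℝ) := by
      have h := Real.rpow_add hx0 ((m:ℝ) - 1) 1
      rw [Real.rpow_one] at h
      rw [← h]
      norm_num
    have hzu : ∀ u : ℝ, Real.exp (-(s * x * u)) = Real.exp (-(s * x * u)) := fun _ => rfl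
    calc x ^ ((m:ℝ) - 1) * Real.exp (-x) *
          (Real.exp (-(s * x)) + s * x * ∫ u in Set.Ioc (0:ℝ) 1,
            u ^ (-δ) * Real.exp (-(s * x * u)))
        = (x ^ ((m:ℝ) - 1) * (Real.exp (-x) * Real.exp (-(s * x)))) +
          s * ((x ^ ((m:ℝ) - 1) * x) * Real.exp (-x) *
            ∫ u in Set.Ioc (0:ℝ) 1, u ^ (-δ) * Real.exp (-(s * x * u))) := by ring
      _ = x ^ ((m:ℝ) - 1) * Real.exp (-((1 + s) * x)) +
          s * (x ^ (m:ℝ) * Real.exp (-x) *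
            ∫ u in Set.Ioc (0:ℝ) 1, u ^ (-δ) * Real.exp (-(s * x * u))) := by
          rw [hexp, hpow]
  -- integrability of the sum form
  have hA : IntegrableOn (fun x : ℝ => x ^ ((m:ℝ) - 1) * Real.exp (-((1 + s) * x)))
      (Set.Ioi 0) := aux_gamma_int hm0 hs1
  have hSum : IntegrableOn
      (fun x : ℝ => x ^ ((m : ℝ) - 1) * Real.exp (-((1 + s) * x)) +
        s * ∫ u in Set.Ioc (0:ℝ) 1,
          x ^ (m:ℝ) * Real.exp (-x) * (u ^ (-δ) * Real.exp (-(s * x * u))))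
      (Set.Ioi 0) := hA.add (hFubInt.const_mul s)
  refine ⟨hSum.congr_fun (fun x hx => (hEq hx).symm) measurableSet_Ioi, hSubInt, ?_⟩
  rw [setIntegral_congr_fun measurableSet_Ioi hEq]
  rw [integral_add hA (hFubInt.const_mul s), integral_const_mul]
  rw [Real.integral_rpow_mul_exp_neg_mul_Ioi hm0 hs1, hFubEq, hSubEq]
  have hG1 : Real.Gamma ((m:ℝ) + 1) = (m:ℝ) * Real.Gamma m :=
    Real.Gamma_add_one (by exact_mod_cast hm.ne')
  have hpow1 : (1 / (1 + s)) ^ ((m:ℝ)) = (1 + s) ^ (-(m:ℝ)) := by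
    rw [one_div, ← Real.rpow_neg_one, ← Real.rpow_mul hs1.le]
    norm_num
  have hss : s ^ δ * s ^ (1 - δ) = s := by
    rw [← Real.rpow_add hs]
    norm_num
  rw [hpow1, hG1]
  set K := ∫ u in Set.Ioc (0:ℝ) 1, u ^ (-δ) * (1 + s * u) ^ (-((m:ℝ) + 1)) with hK
  field_simp
  linear_combination (-((m:ℝ) * K)) * hss
end

section
/- For every δ ∈ (0,1) and every real κ ≥ 1, lim_{s→0⁺} (C_κ(s,1) − 1)/s = δ/(κ(1−δ)). -/
open MeasureTheory Real Set Filter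

lemma aux_int (δ a : ℝ) (hδ1 : δ < 1) (ha : 0 < a) (ha1 : a < 1) :
    ∫ y in a..1, (1-y)^(-δ) = (1-a)^(1-δ)/(1-δ) := by
  rw [intervalIntegral.integral_comp_sub_left (a := a) (b := 1) (fun x => x ^ (-δ)) 1,
    integral_rpow (Or.inl (by linarith)), sub_self, Real.zero_rpow (by linarith)]
  norm_num
  ring_nf

lemma aux_ii (δ a : ℝ) (hδ1 : δ < 1) :
    IntervalIntegrable (fun y => (1-y)^(-δ)) volume a 1 := by
  have := (intervalIntegral.intervalIntegrable_rpow' (r := -δ) (by linarith)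
    (a := 1 - a) (b := 0)).comp_sub_left 1
  simpa using this

lemma aux_ii2 (δ a : ℝ) (hδ0 : 0 < δ) (hδ1 : δ < 1) (ha : 0 < a) (ha1 : a < 1) :
    IntervalIntegrable (fun y => y^δ * (1-y)^(-δ)) volume a 1 := by
  apply (aux_ii δ a hδ1).mono_fun'
  · exact (Measurable.aestronglyMeasurable (by fun_prop))
  · rw [Filter.EventuallyLE, ae_restrict_iff' measurableSet_uIoc]
    filter_upwards with y hy
    rw [Set.uIoc_of_le ha1.le] at hy
    have hy0 : 0 < y := lt_trans ha hy.1
    have h1y : 0 ≤ 1 - y := by linarith [hy.2]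
    have h1 : (0:ℝ) ≤ (1-y)^(-δ) := Real.rpow_nonneg h1y _
    have h2 : y ^ δ ≤ 1 := Real.rpow_le_one hy0.le hy.2 hδ0.le
    rw [Real.norm_eq_abs, abs_of_nonneg (mul_nonneg (Real.rpow_nonneg hy0.le _) h1)]
    calc y^δ * (1-y)^(-δ) ≤ 1 * (1-y)^(-δ) := mul_le_mul_of_nonneg_right h2 h1
      _ = (1-y)^(-δ) := one_mul _

lemma aux_alg1 (δ s : ℝ) (hδ1 : δ < 1) (hs : 0 < s) :
    s^(δ-1) * ((1/(1+s))^δ * ((1-1/(1+s))^(1-δ)/(1-δ))) = (1+s)⁻¹/(1-δ) := by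
  have hts : (0:ℝ) < 1+s := by linarith
  have h1a : (1:ℝ) - 1/(1+s) = s/(1+s) := by field_simp; ring
  rw [h1a, Real.div_rpow hs.le hts.le, one_div, Real.inv_rpow hts.le]
  have e1 : s^(δ-1)*s^(1-δ) = 1 := by rw [← Real.rpow_add hs]; norm_num
  have e2 : (1+s)^δ * (1+s)^(1-δ) = 1+s := by
    rw [← Real.rpow_add hts]; norm_num
  have p1 : s^(δ-1) ≠ 0 := by positivity
  have p2 : (1+s)^δ ≠ 0 := by positivity
  have p3 : (1+s)^(1-δ) ≠ 0 := by positivity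
  have h1δ : (1:ℝ)-δ ≠ 0 := by linarith
  field_simp
  linear_combination (1+s)*e1 - e2

lemma aux_alg2 (δ s : ℝ) (hδ1 : δ < 1) (hs : 0 < s) :
    s^(δ-1) * ((1-1/(1+s))^(1-δ)/(1-δ)) = (1+s)^(δ-1)/(1-δ) := by
  have hts : (0:ℝ) < 1+s := by linarith
  have h1a : (1:ℝ) - 1/(1+s) = s/(1+s) := by field_simp; ring
  rw [h1a, Real.div_rpow hs.le hts.le]
  have e1 : s^(δ-1)*s^(1-δ) = 1 := by rw [← Real.rpow_add hs]; norm_num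
  have e3 : (1+s)^(δ-1) * (1+s)^(1-δ) = 1 := by rw [← Real.rpow_add hts]; norm_num
  have p1 : (1+s)^(1-δ) ≠ 0 := by positivity
  have h1δ : (1:ℝ)-δ ≠ 0 := by linarith
  field_simp
  linear_combination e1 - e3

/-- `C₁(s,m) := (1+s)^{−m} + m s^δ ∫_{1/(1+s)}^1 y^{m+δ−1} (1−y)^{−δ} dy`. -/
noncomputable def C1 (δ s : ℝ) (m : ℕ) : ℝ :=
  (1 + s) ^ (-(m : ℝ)) +
    m * s ^ δ * ∫ y in (1 / (1 + s))..1, y ^ ((m : ℝ) + δ - 1) * (1 - y) ^ (-δ)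

/-- `C_κ(s,m) := (κ−1)/κ + C₁(s,m)/κ`. -/
noncomputable def Cκ (δ κ s : ℝ) (m : ℕ) : ℝ := (κ - 1) / κ + C1 δ s m / κ

lemma aux_main (δ : ℝ) (hδ0 : 0 < δ) (hδ1 : δ < 1) :
    Tendsto (fun s : ℝ => (C1 δ s 1 - 1) / s) (nhdsWithin 0 (Set.Ioi 0))
      (nhds (δ / (1 - δ))) := by
  have h1δ : (0:ℝ) < 1 - δ := by linarith
  -- limits of the bounding functions
  have hbase : Tendsto (fun s : ℝ => 1 + s) (nhdsWithin 0 (Set.Ioi 0)) (nhds 1) := by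
    have : Tendsto (fun s : ℝ => 1 + s) (nhds 0) (nhds (1 + 0)) :=
      (continuous_const.add continuous_id).tendsto 0
    simpa using this.mono_left nhdsWithin_le_nhds
  have hinv : Tendsto (fun s : ℝ => (1+s)⁻¹) (nhdsWithin 0 (Set.Ioi 0)) (nhds 1) := by
    simpa using hbase.inv₀ one_ne_zero
  have hrpow : Tendsto (fun s : ℝ => (1+s)^(δ-1)) (nhdsWithin 0 (Set.Ioi 0)) (nhds 1) := by
    have hc : ContinuousAt (fun x : ℝ => x ^ (δ-1)) 1 :=
      Real.continuousAt_rpow_const 1 (δ-1) (Or.inl one_ne_zero)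
    have := hc.tendsto.comp hbase
    simpa [Real.one_rpow, Function.comp_def] using this
  have key : δ / (1 - δ) = -(1:ℝ) + 1/(1-δ) := by field_simp; ring
  have hlow : Tendsto (fun s : ℝ => -(1+s)⁻¹ + (1+s)⁻¹/(1-δ)) (nhdsWithin 0 (Set.Ioi 0))
      (nhds (δ/(1-δ))) := by
    rw [key]
    exact (hinv.neg).add (hinv.div_const _)
  have hup : Tendsto (fun s : ℝ => -(1+s)⁻¹ + (1+s)^(δ-1)/(1-δ)) (nhdsWithin 0 (Set.Ioi 0))
      (nhds (δ/(1-δ))) := by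
    rw [key]
    exact (hinv.neg).add (hrpow.div_const _)
  refine tendsto_of_tendsto_of_tendsto_of_le_of_le' hlow hup ?_ ?_ <;>
  · filter_upwards [self_mem_nhdsWithin] with s hs
    have hs : (0:ℝ) < s := hs
    have hts : (0:ℝ) < 1+s := by linarith
    set a : ℝ := 1/(1+s) with hadef
    have ha : 0 < a := by positivity
    have ha1 : a < 1 := by
      rw [hadef, div_lt_one hts]; linarith
    set J : ℝ := ∫ y in a..1, y^δ * (1-y)^(-δ) with hJdef
    have hC1 : C1 δ s 1 = (1+s)⁻¹ + s^δ * J := by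
      simp only [C1, Nat.cast_one, one_mul, show ((1:ℝ)+δ-1) = δ from by ring]
      rw [Real.rpow_neg hts.le, Real.rpow_one]
    have hEs : (C1 δ s 1 - 1)/s = -(1+s)⁻¹ + s^(δ-1)*J := by
      rw [hC1]
      have h1 : s^(δ-1) = s^δ / s := by rw [Real.rpow_sub hs, Real.rpow_one]
      rw [h1]
      field_simp
      ring
    have hJint := aux_ii2 δ a hδ0 hδ1 ha ha1
    have hIint := aux_ii δ a hδ1
    have hJub : J ≤ (1-a)^(1-δ)/(1-δ) := by
      rw [← aux_int δ a hδ1 ha ha1]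
      apply intervalIntegral.integral_mono_on ha1.le hJint hIint
      intro y hy
      have hy0 : (0:ℝ) < y := lt_of_lt_of_le ha hy.1
      have h2 : y ^ δ ≤ 1 := Real.rpow_le_one hy0.le hy.2 hδ0.le
      have h3 : (0:ℝ) ≤ (1-y)^(-δ) := Real.rpow_nonneg (by linarith [hy.2]) _
      calc y^δ * (1-y)^(-δ) ≤ 1 * (1-y)^(-δ) := mul_le_mul_of_nonneg_right h2 h3
        _ = (1-y)^(-δ) := one_mul _
    have hJlb : a^δ * ((1-a)^(1-δ)/(1-δ)) ≤ J := by
      have heq : ∫ y in a..1, a^δ * (1-y)^(-δ) = a^δ * ((1-a)^(1-δ)/(1-δ)) := by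
        rw [intervalIntegral.integral_const_mul, aux_int δ a hδ1 ha ha1]
      rw [← heq]
      apply intervalIntegral.integral_mono_on ha1.le (hIint.const_mul _) hJint
      intro y hy
      have h1 : a^δ ≤ y^δ := Real.rpow_le_rpow ha.le hy.1 hδ0.le
      have h2 : (0:ℝ) ≤ (1-y)^(-δ) := Real.rpow_nonneg (by linarith [hy.2]) _
      exact mul_le_mul_of_nonneg_right h1 h2
    have hsp : (0:ℝ) ≤ s^(δ-1) := Real.rpow_nonneg hs.le _
    rw [hEs]
    first
    | · -- lower bound
        have := mul_le_mul_of_nonneg_left hJlb hsp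
        rw [show s^(δ-1) * (a^δ * ((1-a)^(1-δ)/(1-δ))) = s^(δ-1) * ((1/(1+s))^δ * ((1-1/(1+s))^(1-δ)/(1-δ))) by rw [hadef]] at this
        rw [aux_alg1 δ s hδ1 hs] at this
        linarith
    | · -- upper bound
        have := mul_le_mul_of_nonneg_left hJub hsp
        rw [show s^(δ-1) * ((1-a)^(1-δ)/(1-δ)) = s^(δ-1) * ((1-1/(1+s))^(1-δ)/(1-δ)) by rw [hadef]] at this
        rw [aux_alg2 δ s hδ1 hs] at this
        linarith

/-- For `δ ∈ (0,1)` and `κ ≥ 1`, `lim_{s→0⁺} (C_κ(s,1) − 1)/s = δ/(κ(1−δ))`. -/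
theorem stmt_3 (δ κ : ℝ) (hδ : δ ∈ Set.Ioo (0:ℝ) 1) (hκ : 1 ≤ κ) :
    Tendsto (fun s : ℝ => (Cκ δ κ s 1 - 1) / s) (nhdsWithin 0 (Set.Ioi 0))
      (nhds (δ / (κ * (1 - δ)))) := by
  obtain ⟨hδ0, hδ1⟩ := hδ
  have hκ0 : (0:ℝ) < κ := lt_of_lt_of_le one_pos hκ
  have h := (aux_main δ hδ0 hδ1).div_const κ
  have heq : (fun s : ℝ => (Cκ δ κ s 1 - 1) / s) = fun s : ℝ => (C1 δ s 1 - 1) / s / κ := by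
    funext s
    have h1 : Cκ δ κ s 1 - 1 = (C1 δ s 1 - 1)/κ := by
      unfold Cκ; field_simp; ring
    rw [h1, div_right_comm]
  rw [heq]
  convert h using 2
  rw [div_div, mul_comm]
end

section
/- For every δ ∈ (0,1), every real κ ≥ 1 and every positive integer K, lim_{θ→0⁺} (1 − C_κ(θ,1)^{−K})/θ = (K/κ) · δ/(1−δ). -/
open MeasureTheory Real Set Filter
open Topology

theorem C1ratio (δ : ℝ) (hδ0 : 0 < δ) (hδ1 : δ < 1) :
    ∀ θ : ℝ, 0 < θ →
      ((1+θ)⁻¹/(1-δ) - (1+θ)⁻¹) ≤ (C1 δ θ 1 - 1)/θ ∧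
      (C1 δ θ 1 - 1)/θ ≤ ((1+θ)^(δ-1)/(1-δ) - (1+θ)⁻¹) := by
  have h1δ : (0:ℝ) < 1 - δ := by linarith
  intro θ hθ
  have hb : (0:ℝ) < 1 + θ := by linarith
  set a : ℝ := 1/(1+θ) with ha
  have ha0 : 0 < a := by positivity
  have ha1 : a ≤ 1 := by rw [ha, div_le_one hb]; linarith
  -- integrability
  have hI2 : IntervalIntegrable (fun y => (1-y)^(-δ)) volume a 1 := by
    have h := (intervalIntegral.intervalIntegrable_rpow'
      (a := 1 - a) (b := 0) (show (-1:ℝ) < -δ by linarith)).comp_sub_left 1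
    simpa using h
  have hcont : ContinuousOn (fun y : ℝ => y ^ δ) (Set.uIcc a 1) :=
    (continuous_id.rpow_const (fun x => Or.inr hδ0.le)).continuousOn
  have hI : IntervalIntegrable (fun y => y^δ * (1-y)^(-δ)) volume a 1 :=
    hI2.continuousOn_mul hcont
  have hI1 : IntervalIntegrable (fun y => a^δ * (1-y)^(-δ)) volume a 1 := hI2.const_mul _
  have hnn : ∀ y ∈ Set.Icc a 1, (0:ℝ) ≤ (1-y)^(-δ) := fun y hy =>
    Real.rpow_nonneg (by linarith [hy.2]) _
  have hg_low : (∫ y in a..1, a^δ * (1-y)^(-δ)) ≤ ∫ y in a..1, y^δ * (1-y)^(-δ) := by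
    apply intervalIntegral.integral_mono_on ha1 hI1 hI
    intro y hy
    exact mul_le_mul_of_nonneg_right (Real.rpow_le_rpow ha0.le hy.1 hδ0.le) (hnn y hy)
  have hg_up : (∫ y in a..1, y^δ * (1-y)^(-δ)) ≤ ∫ y in a..1, (1-y)^(-δ) := by
    apply intervalIntegral.integral_mono_on ha1 hI hI2
    intro y hy
    nth_rewrite 2 [← one_mul ((1-y)^(-δ))]
    exact mul_le_mul_of_nonneg_right
      (Real.rpow_le_one (le_trans ha0.le hy.1) hy.2 hδ0.le) (hnn y hy)
  have hval : (∫ y in a..1, (1-y)^(-δ)) = (1-a)^(1-δ)/(1-δ) := by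
    have h1 : (∫ y in a..1, (1-y)^(-δ)) = ∫ x in (1-(1:ℝ))..(1-a), x^(-δ) :=
      intervalIntegral.integral_comp_sub_left (fun x => x^(-δ)) 1
    rw [h1]
    simp only [sub_self]
    rw [integral_rpow (Or.inl (show (-1:ℝ) < -δ by linarith))]
    rw [Real.zero_rpow (show -δ + 1 ≠ 0 from ne_of_gt (by linarith)),
      show -δ+1 = 1-δ from by ring]
    ring
  have hC1 : C1 δ θ 1 = a + θ^δ * ∫ y in a..1, y^δ * (1-y)^(-δ) := by
    rw [C1]
    simp only [Nat.cast_one, show (1:ℝ)+δ-1 = δ from by ring, Real.rpow_neg_one, one_mul,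
      ha, one_div]
  -- algebraic identities
  have e1 : (1:ℝ) - a = θ/(1+θ) := by rw [ha]; field_simp; ring
  have ediv : (θ/(1+θ))^(1-δ) = θ^(1-δ)/(1+θ)^(1-δ) := Real.div_rpow hθ.le hb.le _
  have eθ : θ^δ * θ^(1-δ) = θ := by
    rw [← Real.rpow_add hθ, show δ+(1-δ)=1 from by ring, Real.rpow_one]
  have eb : (1+θ)^δ * (1+θ)^(1-δ) = 1+θ := by
    rw [← Real.rpow_add hb, show δ+(1-δ)=1 from by ring, Real.rpow_one]
  have einv : a^δ = ((1+θ)^δ)⁻¹ := by rw [ha, one_div, ← Real.inv_rpow hb.le]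
  have eexp : (1+θ)^(δ-1) = ((1+θ)^(1-δ))⁻¹ := by
    rw [show δ-1 = -(1-δ) from by ring, Real.rpow_neg hb.le]
  have identityLow : θ^δ * (a^δ * ((1-a)^(1-δ)/(1-δ))) = (1+θ)⁻¹/(1-δ) * θ := by
    calc θ^δ * (a^δ * ((1-a)^(1-δ)/(1-δ)))
        = (θ^δ*θ^(1-δ)) / ((1+θ)^δ*(1+θ)^(1-δ)) / (1-δ) := by rw [e1, ediv, einv]; ring
      _ = (1+θ)⁻¹/(1-δ) * θ := by rw [eθ, eb]; ring
  have identityUp : θ^δ * ((1-a)^(1-δ)/(1-δ)) = (1+θ)^(δ-1)/(1-δ) * θ := by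
    calc θ^δ * ((1-a)^(1-δ)/(1-δ))
        = (θ^δ*θ^(1-δ)) / (1+θ)^(1-δ) / (1-δ) := by rw [e1, ediv]; ring
      _ = (1+θ)^(δ-1)/(1-δ) * θ := by rw [eθ, eexp]; ring
  have hamin : a - 1 = -((1+θ)⁻¹ * θ) := by rw [ha]; field_simp; ring
  have hlowval : (∫ y in a..1, a^δ * (1-y)^(-δ)) = a^δ*((1-a)^(1-δ)/(1-δ)) := by
    rw [intervalIntegral.integral_const_mul, hval]
  constructor
  · rw [le_div_iff₀ hθ]
    have hmul := mul_le_mul_of_nonneg_left (hlowval ▸ hg_low) (Real.rpow_nonneg hθ.le δ)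
    have heq : ((1+θ)⁻¹/(1-δ) - (1+θ)⁻¹) * θ
        = θ^δ * (a^δ*((1-a)^(1-δ)/(1-δ))) + (a - 1) := by
      rw [identityLow, hamin]; ring
    rw [heq, hC1]; linarith
  · rw [div_le_iff₀ hθ]
    have hmul := mul_le_mul_of_nonneg_left (hval ▸ hg_up) (Real.rpow_nonneg hθ.le δ)
    have heq : ((1+θ)^(δ-1)/(1-δ) - (1+θ)⁻¹) * θ
        = θ^δ * ((1-a)^(1-δ)/(1-δ)) + (a - 1) := by
      rw [identityUp, hamin]; ring
    rw [heq, hC1]; linarith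

/-- For `δ ∈ (0,1)`, `κ ≥ 1` and a positive integer `K`,
`lim_{θ→0⁺} (1 − C_κ(θ,1)^{−K})/θ = (K/κ) · δ/(1−δ)`. -/
theorem stmt_4 (δ κ : ℝ) (K : ℕ) (hδ : δ ∈ Set.Ioo (0:ℝ) 1) (hκ : 1 ≤ κ) (hK : 0 < K) :
    Tendsto (fun θ : ℝ => (1 - Cκ δ κ θ 1 ^ (-(K : ℤ))) / θ) (nhdsWithin 0 (Set.Ioi 0))
      (nhds ((K / κ) * (δ / (1 - δ)))) := by
  obtain ⟨hδ0, hδ1⟩ := hδ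
  have hκ0 : (0:ℝ) < κ := lt_of_lt_of_le one_pos hκ
  have h1δ : (0:ℝ) < 1 - δ := by linarith
  set L : ℝ := δ / (1 - δ) with hL
  have hbound := C1ratio δ hδ0 hδ1
  -- limits of bounding functions
  have hLoT : Tendsto (fun θ : ℝ => (1+θ)⁻¹/(1-δ) - (1+θ)⁻¹) (𝓝[>] (0:ℝ)) (𝓝 L) := by
    have hc : ContinuousAt (fun θ : ℝ => (1+θ)⁻¹/(1-δ) - (1+θ)⁻¹) 0 := by
      have hinv : ContinuousAt (fun θ : ℝ => (1+θ)⁻¹) 0 :=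
        ContinuousAt.inv₀ (by fun_prop) (by norm_num)
      exact (hinv.div_const _).sub hinv
    have h0 : (fun θ : ℝ => (1+θ)⁻¹/(1-δ) - (1+θ)⁻¹) 0 = L := by
      simp only [add_zero, inv_one, hL]
      field_simp; ring
    exact h0 ▸ hc.tendsto.mono_left nhdsWithin_le_nhds
  have hHiT : Tendsto (fun θ : ℝ => (1+θ)^(δ-1)/(1-δ) - (1+θ)⁻¹) (𝓝[>] (0:ℝ)) (𝓝 L) := by
    have hc : ContinuousAt (fun θ : ℝ => (1+θ)^(δ-1)/(1-δ) - (1+θ)⁻¹) 0 := by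
      have hrp : ContinuousAt (fun θ : ℝ => (1+θ)^(δ-1)) 0 :=
        ContinuousAt.rpow_const (by fun_prop) (Or.inl (by norm_num))
      exact (hrp.div_const _).sub (ContinuousAt.inv₀ (by fun_prop) (by norm_num))
    have h0 : (fun θ : ℝ => (1+θ)^(δ-1)/(1-δ) - (1+θ)⁻¹) 0 = L := by
      simp only [add_zero, Real.one_rpow, inv_one, hL]
      field_simp; ring
    exact h0 ▸ hc.tendsto.mono_left nhdsWithin_le_nhds
  have hC1T : Tendsto (fun θ : ℝ => (C1 δ θ 1 - 1)/θ) (𝓝[>] (0:ℝ)) (𝓝 L) :=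
    tendsto_of_tendsto_of_tendsto_of_le_of_le' hLoT hHiT
      (eventually_nhdsWithin_of_forall fun θ hθ => (hbound θ hθ).1)
      (eventually_nhdsWithin_of_forall fun θ hθ => (hbound θ hθ).2)
  have hCκeq : ∀ θ : ℝ, Cκ δ κ θ 1 - 1 = (C1 δ θ 1 - 1)/κ := by
    intro θ; rw [Cκ]; field_simp; ring
  have hCκT : Tendsto (fun θ : ℝ => (Cκ δ κ θ 1 - 1)/θ) (𝓝[>] (0:ℝ)) (𝓝 (L/κ)) := by
    refine (hC1T.div_const κ).congr fun θ => ?_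
    rw [hCκeq]; ring
  -- C1 exceeds 1 for θ > 0
  have hne : ∀ θ : ℝ, θ ∈ Set.Ioi (0:ℝ) → Cκ δ κ θ 1 ≠ 1 := by
    intro θ hθ
    have hb : (0:ℝ) < 1 + θ := by linarith [mem_Ioi.mp hθ]
    have hLo : (0:ℝ) < (1+θ)⁻¹/(1-δ) - (1+θ)⁻¹ := by
      rw [sub_pos, lt_div_iff₀ h1δ]
      have : (0:ℝ) < (1+θ)⁻¹ := inv_pos.mpr hb
      nlinarith
    have h1 : 0 < (C1 δ θ 1 - 1)/θ := lt_of_lt_of_le hLo (hbound θ (mem_Ioi.mp hθ)).1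
    have h2 : 0 < C1 δ θ 1 - 1 := by
      have := mul_pos h1 (mem_Ioi.mp hθ)
      rwa [div_mul_cancel₀ _ (ne_of_gt (mem_Ioi.mp hθ))] at this
    have : 0 < Cκ δ κ θ 1 - 1 := by rw [hCκeq]; positivity
    intro hcon; rw [hcon] at this; simp at this
  have hsub : Tendsto (fun θ : ℝ => Cκ δ κ θ 1 - 1) (𝓝[>] (0:ℝ)) (𝓝 0) := by
    have hid : Tendsto (fun θ : ℝ => θ) (𝓝[>] (0:ℝ)) (𝓝 0) :=
      tendsto_id.mono_left nhdsWithin_le_nhds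
    have h := hCκT.mul hid
    rw [mul_zero] at h
    refine h.congr' (eventually_nhdsWithin_of_forall fun θ hθ => ?_)
    rw [div_mul_cancel₀ _ (ne_of_gt (mem_Ioi.mp hθ))]
  have hto1 : Tendsto (fun θ : ℝ => Cκ δ κ θ 1) (𝓝[>] (0:ℝ)) (𝓝 1) := by
    have := hsub.add_const 1
    simpa using this
  have hx1 : Tendsto (fun θ : ℝ => Cκ δ κ θ 1) (𝓝[>] (0:ℝ)) (𝓝[≠] (1:ℝ)) := by
    rw [tendsto_nhdsWithin_iff]
    exact ⟨hto1, eventually_nhdsWithin_of_forall fun θ hθ => hne θ hθ⟩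
  -- slope of zpow at 1
  have hder := hasDerivAt_zpow (-(K:ℤ)) (1:ℝ) (Or.inl one_ne_zero)
  have hslope : Tendsto (slope (fun x : ℝ => x ^ (-(K:ℤ))) 1) (𝓝[≠] (1:ℝ)) (𝓝 (-(K:ℝ))) := by
    have h := hasDerivAt_iff_tendsto_slope.mp hder
    simpa using h
  have hs2 : Tendsto (fun θ : ℝ => slope (fun x : ℝ => x ^ (-(K:ℤ))) 1 (Cκ δ κ θ 1))
      (𝓝[>] (0:ℝ)) (𝓝 (-(K:ℝ))) := hslope.comp hx1
  have hfinal := hs2.neg.mul hCκT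
  have hvaleq : -(-(K:ℝ)) * (L/κ) = (K / κ) * (δ / (1 - δ)) := by rw [hL]; ring
  rw [← hvaleq]
  refine hfinal.congr' (eventually_nhdsWithin_of_forall fun θ hθ => ?_)
  have hθ0 : (0:ℝ) < θ := mem_Ioi.mp hθ
  have hx : Cκ δ κ θ 1 - 1 ≠ 0 := sub_ne_zero.mpr (hne θ hθ)
  rw [slope_def_field, one_zpow]
  field_simp; ring
end

section
/- Fix δ ∈ (0,1), a real κ ≥ 1 and an integer K ≥ 2. For θ > 0 define P(θ) := (K−1) ∫_0^1 (1−x^δ)^{K−2} δ x^{δ−1} C_κ(θx,1)^{−K} dx. Then lim_{θ→0⁺} (1 − P(θ))/θ = (1/κ) · (K!/(1+1/δ)_{K−1}) · δ/(1−δ), where (x)_n := x(x+1)⋯(x+n−1) is the rising factorial with (x)_0 := 1. -/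
open MeasureTheory Real Set Filter

/-- The rising factorial `(x)_n = x(x+1)⋯(x+n−1)`, with `(x)_0 = 1`. -/
noncomputable def risingFac (x : ℝ) (n : ℕ) : ℝ := ∏ i ∈ Finset.range n, (x + i)

namespace Stmt5Aux

variable {δ κ : ℝ}

lemma one_sub_pow_bound {t : ℝ} (ht : 1 ≤ t) (n : ℕ) : 1 - (t ^ n)⁻¹ ≤ n * (t - 1) := by
  induction n with
  | zero => simp
  | succ n ih =>
    have ht0 : (0:ℝ) < t := one_pos.trans_le ht
    have htn : (0:ℝ) < t ^ n := pow_pos ht0 n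
    have h2 : (t ^ n)⁻¹ ≤ 1 := by
      rw [inv_le_one₀ htn]; exact one_le_pow₀ ht
    have h3 : 1 - t⁻¹ ≤ t - 1 := by
      have h4 : t * t⁻¹ = 1 := mul_inv_cancel₀ ht0.ne'
      nlinarith [inv_nonneg.mpr ht0.le]
    have h5 : (t ^ (n+1))⁻¹ = (t ^ n)⁻¹ * t⁻¹ := by
      rw [pow_succ, mul_inv]
    have h6 : (0:ℝ) ≤ 1 - t⁻¹ := by
      have : t⁻¹ ≤ 1 := by rw [inv_le_one₀ ht0]; exact ht
      linarith
    have h7 : (t^n)⁻¹ * (1 - t⁻¹) ≤ 1 * (t - 1) :=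
      mul_le_mul h2 h3 h6 zero_le_one
    have h8 : 1 - (t ^ (n+1))⁻¹ = (1 - (t^n)⁻¹) + (t^n)⁻¹ * (1 - t⁻¹) := by
      rw [h5]; ring
    push_cast
    nlinarith [ih]

section hδ
variable (hδ : δ ∈ Set.Ioo (0:ℝ) 1)
include hδ

lemma oneSub_ii : IntervalIntegrable (fun y : ℝ => (1 - y) ^ (-δ)) volume 0 1 := by
  have h := (intervalIntegral.intervalIntegrable_rpow' (a := 1) (b := 0)
      (by linarith [hδ.2] : (-1:ℝ) < -δ)).comp_sub_left 1
  simpa using h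

lemma g_ii : IntervalIntegrable (fun y : ℝ => y ^ δ * (1 - y) ^ (-δ)) volume 0 1 :=
  (oneSub_ii hδ).continuousOn_mul
    (continuousOn_id.rpow_const (fun _ _ => Or.inr hδ.1.le))

lemma E_eval {c : ℝ} (hc : c ∈ Icc (0:ℝ) 1) :
    ∫ y in c..1, (1 - y) ^ (-δ) = (1 - c) ^ (1 - δ) / (1 - δ) := by
  have h := intervalIntegral.integral_comp_sub_left (a := c) (b := 1)
      (fun t : ℝ => t ^ (-δ)) 1
  rw [h, integral_rpow (Or.inl (by linarith [hδ.2]))]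
  rw [show (1:ℝ) - 1 = 0 by norm_num,
    Real.zero_rpow (by intro hcon; linarith [hδ.2] : -δ + 1 ≠ 0)]
  rw [show -δ + 1 = 1 - δ by ring, sub_zero]

omit hδ in
lemma mem01 {s : ℝ} (hs : 0 ≤ s) : 1/(1+s) ∈ Icc (0:ℝ) 1 := by
  constructor
  · positivity
  · rw [div_le_one (by linarith)]; linarith

lemma I_le {s : ℝ} (hs : 0 ≤ s) :
    ∫ y in (1/(1+s))..1, y ^ δ * (1-y) ^ (-δ) ≤ (1 - 1/(1+s)) ^ (1-δ) / (1-δ) := by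
  have hc := mem01 hs
  rw [← E_eval hδ hc]
  apply intervalIntegral.integral_mono_on hc.2
  · exact (g_ii hδ).mono_set (uIcc_subset_uIcc (by simpa using hc) (by simp))
  · exact (oneSub_ii hδ).mono_set (uIcc_subset_uIcc (by simpa using hc) (by simp))
  · intro y hy
    have hy0 : 0 ≤ y := le_trans hc.1 hy.1
    have h1 : y ^ δ ≤ 1 := Real.rpow_le_one hy0 hy.2 hδ.1.le
    have h2 : (0:ℝ) ≤ (1-y) ^ (-δ) := Real.rpow_nonneg (by linarith [hy.2]) _
    nlinarith [Real.rpow_nonneg hy0 δ]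

lemma I_ge {s : ℝ} (hs : 0 ≤ s) :
    (1/(1+s)) ^ δ * ((1 - 1/(1+s)) ^ (1-δ) / (1-δ))
      ≤ ∫ y in (1/(1+s))..1, y ^ δ * (1-y) ^ (-δ) := by
  have hc := mem01 hs
  have key : (1/(1+s)) ^ δ * ((1 - 1/(1+s)) ^ (1-δ) / (1-δ))
      = ∫ y in (1/(1+s))..1, (1/(1+s)) ^ δ * (1-y) ^ (-δ) := by
    rw [intervalIntegral.integral_const_mul, E_eval hδ hc]
  rw [key]
  apply intervalIntegral.integral_mono_on hc.2
  · exact (IntervalIntegrable.const_mul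
      ((oneSub_ii hδ).mono_set (uIcc_subset_uIcc (by simpa using hc) (by simp))) _)
  · exact (g_ii hδ).mono_set (uIcc_subset_uIcc (by simpa using hc) (by simp))
  · intro y hy
    have h2 : (0:ℝ) ≤ (1-y) ^ (-δ) := Real.rpow_nonneg (by linarith [hy.2]) _
    exact mul_le_mul_of_nonneg_right (Real.rpow_le_rpow hc.1 hy.1 hδ.1.le) h2

lemma C1_eq {s : ℝ} (hs : 0 ≤ s) :
    C1 δ s 1 = (1 + s)⁻¹ + s ^ δ * ∫ y in (1/(1+s))..1, y ^ δ * (1-y) ^ (-δ) := by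
  unfold C1
  have h1 : ((1:ℕ):ℝ) = 1 := Nat.cast_one
  rw [h1]
  rw [show -(1:ℝ) = -(1:ℝ) from rfl]
  rw [Real.rpow_neg (by linarith : (0:ℝ) ≤ 1 + s), Real.rpow_one, one_mul]
  simp only [show (1:ℝ) + δ - 1 = δ from by ring]

lemma key_alg {s : ℝ} (hs : 0 < s) :
    s ^ δ * ((1 - 1/(1+s)) ^ (1-δ) / (1-δ)) = s * (1+s) ^ (δ-1) / (1-δ) := by
  have h1 : (0:ℝ) < 1 + s := by linarith
  have h2 : 1 - 1/(1+s) = s/(1+s) := by field_simp; ring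
  have h3 : s ^ δ * s ^ (1-δ) = s := by
    rw [← Real.rpow_add hs]; norm_num
  have h4 : ((1+s):ℝ) ^ (δ-1) = ((1+s) ^ (1-δ))⁻¹ := by
    rw [show δ - 1 = -(1-δ) from by ring, Real.rpow_neg h1.le]
  have h5 : (0:ℝ) < (1+s) ^ (1-δ) := Real.rpow_pos_of_pos h1 _
  rw [h2, Real.div_rpow hs.le h1.le, h4]
  field_simp
  rw [h3]

lemma key_alg2 {s : ℝ} (hs : 0 < s) :
    s ^ δ * ((1/(1+s)) ^ δ * ((1 - 1/(1+s)) ^ (1-δ) / (1-δ))) = (s/(1+s)) / (1-δ) := by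
  have h1 : (0:ℝ) < 1 + s := by linarith
  have h2 : 1 - 1/(1+s) = s/(1+s) := by field_simp; ring
  have ht : (0:ℝ) < s/(1+s) := by positivity
  have h3 : s ^ δ * (1/(1+s)) ^ δ = (s/(1+s)) ^ δ := by
    rw [← Real.mul_rpow hs.le (by positivity)]
    congr 1; field_simp
  have h4 : (s/(1+s)) ^ δ * (s/(1+s)) ^ (1-δ) = s/(1+s) := by
    rw [← Real.rpow_add ht]; norm_num
  rw [h2, ← mul_assoc, h3, div_eq_mul_inv ((s/(1+s)) ^ (1-δ)), ← mul_assoc, h4]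
  ring

lemma C1_le {s : ℝ} (hs : 0 ≤ s) :
    C1 δ s 1 ≤ (1+s)⁻¹ + s * (1+s) ^ (δ-1) / (1-δ) := by
  rcases eq_or_lt_of_le hs with rfl|hs'
  · rw [C1_eq hδ le_rfl]
    norm_num [Real.zero_rpow hδ.1.ne']
  · rw [C1_eq hδ hs, ← key_alg hδ hs']
    have h := I_le hδ hs
    have h0 : (0:ℝ) ≤ s ^ δ := Real.rpow_nonneg hs _
    nlinarith

lemma C1_ge {s : ℝ} (hs : 0 ≤ s) :
    1 + (s/(1+s)) * (δ/(1-δ)) ≤ C1 δ s 1 := by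
  rcases eq_or_lt_of_le hs with rfl|hs'
  · rw [C1_eq hδ le_rfl]
    norm_num [Real.zero_rpow hδ.1.ne']
  · have h1 : (0:ℝ) < 1 + s := by linarith
    have halg3 : (1+s)⁻¹ + (s/(1+s))/(1-δ) = 1 + (s/(1+s)) * (δ/(1-δ)) := by
      have hδ1 : (1:ℝ) - δ ≠ 0 := by intro hcon; linarith [hδ.2]
      field_simp
      ring
    rw [C1_eq hδ hs, ← halg3, ← key_alg2 hδ hs']
    have h := I_ge hδ hs
    have h0 : (0:ℝ) ≤ s ^ δ := Real.rpow_nonneg hs _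
    nlinarith

section hκ
variable (hκ : 1 ≤ κ)
include hκ

omit hδ in
lemma hκ0 : (0:ℝ) < κ := one_pos.trans_le hκ

omit hδ in
lemma Cκ_sub_one {s : ℝ} : Cκ δ κ s 1 - 1 = (C1 δ s 1 - 1)/κ := by
  have h := hκ0 hκ
  unfold Cκ
  field_simp
  ring

lemma Cκ_ge_one {s : ℝ} (hs : 0 ≤ s) : 1 ≤ Cκ δ κ s 1 := by
  have h := C1_ge hδ hs
  have h1 : (0:ℝ) < 1 + s := by linarith
  have hd : (0:ℝ) < 1 - δ := by linarith [hδ.2]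
  have h2 : 0 ≤ (s/(1+s)) * (δ/(1-δ)) :=
    mul_nonneg (div_nonneg hs h1.le) (div_nonneg hδ.1.le hd.le)
  have h3 : 1 ≤ C1 δ s 1 := by linarith
  have h4 : 0 ≤ (C1 δ s 1 - 1)/κ := div_nonneg (by linarith) (hκ0 hκ).le
  have h5 := Cκ_sub_one (δ := δ) (s := s) hκ
  linarith

lemma Cκ_gt_one {s : ℝ} (hs : 0 < s) : 1 < Cκ δ κ s 1 := by
  have h := C1_ge hδ hs.le
  have h1 : (0:ℝ) < 1 + s := by linarith
  have hd : (0:ℝ) < 1 - δ := by linarith [hδ.2]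
  have h2 : 0 < (s/(1+s)) * (δ/(1-δ)) :=
    mul_pos (div_pos hs h1) (div_pos hδ.1 hd)
  have h3 : 1 < C1 δ s 1 := by linarith
  have h4 : 0 < (C1 δ s 1 - 1)/κ := div_pos (by linarith) (hκ0 hκ)
  have h5 := Cκ_sub_one (δ := δ) (s := s) hκ
  linarith

lemma Cκ_le_lin {s : ℝ} (hs : 0 ≤ s) : Cκ δ κ s 1 ≤ 1 + (s/(1-δ))/κ := by
  have h := C1_le hδ hs
  have h1 : (0:ℝ) < 1 + s := by linarith
  have h2 : ((1+s):ℝ)⁻¹ ≤ 1 := by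
    rw [inv_le_one₀ h1]; linarith
  have h3 : ((1+s):ℝ) ^ (δ-1) ≤ 1 :=
    Real.rpow_le_one_of_one_le_of_nonpos (by linarith) (by linarith [hδ.2])
  have hd : (0:ℝ) < 1 - δ := by linarith [hδ.2]
  have hk := hκ0 hκ
  have h4 : s * (1+s) ^ (δ-1) / (1-δ) ≤ s / (1-δ) := by
    gcongr
    nlinarith [Real.rpow_nonneg h1.le (δ-1)]
  have h5 : C1 δ s 1 - 1 ≤ s/(1-δ) := by linarith
  have h6 : (C1 δ s 1 - 1)/κ ≤ (s/(1-δ))/κ := by gcongr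
  have h7 := Cκ_sub_one (δ := δ) (s := s) hκ
  linarith
end hκ

section hκ2
variable (hκ : 1 ≤ κ)
include hκ

lemma Cκ_slope_tendsto :
    Tendsto (fun s => (Cκ δ κ s 1 - 1)/s) (nhdsWithin 0 (Set.Ioi 0))
      (nhds (δ/((1-δ)*κ))) := by
  have hk := hκ0 hκ
  have hd : (0:ℝ) < 1 - δ := by linarith [hδ.2]
  have hlow : Tendsto (fun s : ℝ => ((1+s)⁻¹ * (δ/(1-δ)))/κ) (nhdsWithin 0 (Set.Ioi 0))
      (nhds (δ/((1-δ)*κ))) := by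
    have hc : ContinuousAt (fun s : ℝ => ((1+s)⁻¹ * (δ/(1-δ)))/κ) 0 := by
      apply ContinuousAt.div_const
      exact (((continuousAt_const.add continuousAt_id).inv₀ (by norm_num)).mul continuousAt_const)
    have h' : Tendsto (fun s : ℝ => ((1+s)⁻¹ * (δ/(1-δ)))/κ) (nhdsWithin 0 (Set.Ioi 0))
        (nhds (((1+(0:ℝ))⁻¹ * (δ/(1-δ)))/κ)) := hc.tendsto.mono_left nhdsWithin_le_nhds
    have hval : ((1+(0:ℝ))⁻¹ * (δ/(1-δ)))/κ = δ/((1-δ)*κ) := by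
      rw [show ((1:ℝ)+0)⁻¹ = 1 by norm_num, one_mul, div_div]
    rwa [hval] at h'
  have hup : Tendsto (fun s : ℝ => ((1+s) ^ (δ-1)/(1-δ) - (1+s)⁻¹)/κ)
      (nhdsWithin 0 (Set.Ioi 0)) (nhds (δ/((1-δ)*κ))) := by
    have hc : ContinuousAt (fun s : ℝ => ((1+s) ^ (δ-1)/(1-δ) - (1+s)⁻¹)/κ) 0 := by
      apply ContinuousAt.div_const
      apply ContinuousAt.sub
      · exact ((continuousAt_const.add continuousAt_id).rpow_const
          (Or.inl (by norm_num))).div_const _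
      · exact (continuousAt_const.add continuousAt_id).inv₀ (by norm_num)
    have h' : Tendsto (fun s : ℝ => ((1+s) ^ (δ-1)/(1-δ) - (1+s)⁻¹)/κ)
        (nhdsWithin 0 (Set.Ioi 0))
        (nhds (((1+(0:ℝ)) ^ (δ-1)/(1-δ) - (1+(0:ℝ))⁻¹)/κ)) :=
      hc.tendsto.mono_left nhdsWithin_le_nhds
    have hval : ((1+(0:ℝ)) ^ (δ-1)/(1-δ) - (1+(0:ℝ))⁻¹)/κ = δ/((1-δ)*κ) := by
      rw [show (1:ℝ)+0 = 1 by norm_num, Real.one_rpow, inv_one]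
      field_simp
      ring
    rwa [hval] at h'
  apply tendsto_of_tendsto_of_tendsto_of_le_of_le' hlow hup
  · filter_upwards [self_mem_nhdsWithin] with s hs
    have hs' : (0:ℝ) < s := hs
    have h1 : (0:ℝ) < 1 + s := by linarith
    have h := C1_ge hδ hs'.le
    have h5 := Cκ_sub_one (δ := δ) (s := s) hκ
    rw [h5, div_div, div_le_div_iff₀ (by positivity) (by positivity)]
    have he : s/(1+s) = s * (1+s)⁻¹ := div_eq_mul_inv _ _
    rw [he] at h
    calc (1+s)⁻¹ * (δ/(1-δ)) * (κ * s) = (s * (1+s)⁻¹ * (δ/(1-δ))) * κ := by ring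
      _ ≤ (C1 δ s 1 - 1) * κ := by nlinarith
  · filter_upwards [self_mem_nhdsWithin] with s hs
    have hs' : (0:ℝ) < s := hs
    have h1 : (0:ℝ) < 1 + s := by linarith
    have h := C1_le hδ hs'.le
    have h5 := Cκ_sub_one (δ := δ) (s := s) hκ
    rw [h5, div_div, div_le_div_iff₀ (by positivity) (by positivity)]
    have h6 : C1 δ s 1 - 1 ≤ s * (1+s) ^ (δ-1) / (1-δ) - s * (1+s)⁻¹ := by
      have hee : ((1:ℝ)+s)⁻¹ = 1 - s * (1+s)⁻¹ := by field_simp; ring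
      rw [hee] at h
      linarith
    calc (C1 δ s 1 - 1) * κ ≤ (s * (1+s) ^ (δ-1)/(1-δ) - s * (1+s)⁻¹) * κ := by nlinarith
      _ = ((1+s) ^ (δ-1)/(1-δ) - (1+s)⁻¹) * (κ * s) := by ring

lemma outage_slope (K : ℕ) :
    Tendsto (fun s => (1 - (Cκ δ κ s 1 ^ K)⁻¹)/s) (nhdsWithin 0 (Set.Ioi 0))
      (nhds (K * (δ/((1-δ)*κ)))) := by
  have hk := hκ0 hκ
  have hd : (0:ℝ) < 1 - δ := by linarith [hδ.2]
  have hdAt : HasDerivAt (fun t : ℝ => (t ^ K)⁻¹) (-(K:ℝ)) 1 := by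
    have h1 : HasDerivAt (fun t : ℝ => t ^ K) ((K:ℝ) * 1 ^ (K-1)) 1 := hasDerivAt_pow K 1
    have h2 := h1.inv (by norm_num : (1:ℝ) ^ K ≠ 0)
    have h3 : HasDerivAt (fun t : ℝ => t ^ K)⁻¹ (-(K:ℝ)) 1 := by simpa using h2
    exact h3
  have hslope : Tendsto (slope (fun t : ℝ => (t ^ K)⁻¹) 1) (nhdsWithin 1 {(1:ℝ)}ᶜ)
      (nhds (-(K:ℝ))) := hasDerivAt_iff_tendsto_slope.mp hdAt
  have hmap : Tendsto (fun s => Cκ δ κ s 1) (nhdsWithin 0 (Set.Ioi 0))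
      (nhdsWithin 1 {(1:ℝ)}ᶜ) := by
    rw [tendsto_nhdsWithin_iff]
    constructor
    · have hc : ContinuousAt (fun s : ℝ => 1 + (s/(1-δ))/κ) 0 :=
        continuousAt_const.add ((continuousAt_id.div_const _).div_const _)
      have hup : Tendsto (fun s : ℝ => 1 + (s/(1-δ))/κ) (nhdsWithin 0 (Set.Ioi 0))
          (nhds (1 + ((0:ℝ)/(1-δ))/κ)) := hc.tendsto.mono_left nhdsWithin_le_nhds
      rw [show 1 + ((0:ℝ)/(1-δ))/κ = 1 by norm_num] at hup
      apply tendsto_of_tendsto_of_tendsto_of_le_of_le' tendsto_const_nhds hup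
      · filter_upwards [self_mem_nhdsWithin] with s hs
        exact Cκ_ge_one hδ hκ (le_of_lt hs)
      · filter_upwards [self_mem_nhdsWithin] with s hs
        exact Cκ_le_lin hδ hκ (le_of_lt hs)
    · filter_upwards [self_mem_nhdsWithin] with s hs
      exact (Cκ_gt_one hδ hκ hs).ne'
  have hcomp := hslope.comp hmap
  have hmain := (hcomp.neg).mul (Cκ_slope_tendsto hδ hκ)
  have heq : (fun s => -(slope (fun t : ℝ => (t ^ K)⁻¹) 1 (Cκ δ κ s 1))
      * ((Cκ δ κ s 1 - 1)/s)) =ᶠ[nhdsWithin 0 (Set.Ioi 0)]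
      (fun s => (1 - (Cκ δ κ s 1 ^ K)⁻¹)/s) := by
    filter_upwards [self_mem_nhdsWithin] with s hs
    have hgt := Cκ_gt_one hδ hκ hs
    have hne : Cκ δ κ s 1 - 1 ≠ 0 := by intro hcon; linarith
    have hs' : (s:ℝ) ≠ 0 := (ne_of_gt hs)
    rw [slope_def_field]
    field_simp
    ring
  have hfin := hmain.congr' heq
  simpa using hfin

end hκ2

section more
variable (hκ : 1 ≤ κ)
include hκ

lemma pointwise_lim (K : ℕ) {x : ℝ} (hx : x ∈ Ioc (0:ℝ) 1) :
    Tendsto (fun θ => (1 - (Cκ δ κ (θ*x) 1 ^ K)⁻¹)/θ) (nhdsWithin 0 (Set.Ioi 0))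
      (nhds (K * (δ/((1-δ)*κ)) * x)) := by
  have hmul : Tendsto (fun θ : ℝ => θ * x) (nhdsWithin 0 (Set.Ioi 0))
      (nhdsWithin 0 (Set.Ioi 0)) := by
    rw [tendsto_nhdsWithin_iff]
    constructor
    · have h1 : Tendsto (fun θ : ℝ => θ * x) (nhds 0) (nhds (0 * x)) :=
        (continuous_mul_right x).tendsto 0
      rw [zero_mul] at h1
      exact h1.mono_left nhdsWithin_le_nhds
    · filter_upwards [self_mem_nhdsWithin] with θ hθ
      exact mul_pos hθ hx.1
  have h := (outage_slope hδ hκ K).comp hmul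
  have h2 := h.mul_const x
  apply h2.congr'
  filter_upwards [self_mem_nhdsWithin] with θ hθ
  have hθ' : (θ:ℝ) ≠ 0 := ne_of_gt hθ
  have hx' : (x:ℝ) ≠ 0 := ne_of_gt hx.1
  show (1 - (Cκ δ κ (θ*x) 1 ^ K)⁻¹)/(θ*x) * x = (1 - (Cκ δ κ (θ*x) 1 ^ K)⁻¹)/θ
  field_simp

end more

section cont
include hδ

lemma C1_contOn : ContinuousOn (fun s => C1 δ s 1) (Ici (0:ℝ)) := by
  have hg : IntegrableOn (fun y : ℝ => y ^ δ * (1 - y) ^ (-δ)) (uIcc (0:ℝ) 1) volume := by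
    rw [uIcc_of_le zero_le_one]
    exact (intervalIntegrable_iff_integrableOn_Icc_of_le zero_le_one).mp (g_ii hδ)
  have hF : ContinuousOn (fun c => ∫ y in c..1, y ^ δ * (1 - y) ^ (-δ)) (uIcc (0:ℝ) 1) :=
    intervalIntegral.continuousOn_primitive_interval_left hg
  have hinner : ContinuousOn (fun s : ℝ => 1/(1+s)) (Ici (0:ℝ)) := by
    apply ContinuousOn.div continuousOn_const (continuousOn_const.add continuousOn_id)
    intro s hs
    have h0 : (0:ℝ) ≤ s := hs
    intro hcon; simp only [Pi.add_apply, id_eq] at hcon; linarith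
  have hcomp : ContinuousOn (fun s : ℝ => ∫ y in (1/(1+s))..1, y ^ δ * (1 - y) ^ (-δ))
      (Ici (0:ℝ)) := by
    apply hF.comp hinner
    intro s hs
    have hs' : (0:ℝ) ≤ s := hs
    rw [uIcc_of_le zero_le_one]
    exact mem01 hs'
  have hres : ContinuousOn (fun s : ℝ =>
      (1 + s)⁻¹ + s ^ δ * ∫ y in (1/(1+s))..1, y ^ δ * (1 - y) ^ (-δ)) (Ici (0:ℝ)) := by
    apply ContinuousOn.add
    · apply ContinuousOn.inv₀ (continuousOn_const.add continuousOn_id)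
      intro s hs
      have h0 : (0:ℝ) ≤ s := hs
      intro hcon; simp only [Pi.add_apply, id_eq] at hcon; linarith
    · exact (continuousOn_id.rpow_const (fun _ _ => Or.inr hδ.1.le)).mul hcomp
  apply hres.congr
  intro s hs
  exact C1_eq hδ hs

lemma Cκ_contOn (hκ : 1 ≤ κ) : ContinuousOn (fun s => Cκ δ κ s 1) (Ici (0:ℝ)) := by
  unfold Cκ
  exact continuousOn_const.add ((C1_contOn hδ).div_const κ)

lemma w_mul_ii {n : ℕ} {Q : ℝ → ℝ} (hQ : ContinuousOn Q (Icc (0:ℝ) 1)) :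
    IntervalIntegrable (fun x => (1 - x ^ δ) ^ n * δ * x ^ (δ-1) * Q x) volume 0 1 := by
  have h1 : IntervalIntegrable (fun x : ℝ => x ^ (δ-1)) volume 0 1 :=
    intervalIntegral.intervalIntegrable_rpow' (by linarith [hδ.1])
  have h2 : ContinuousOn (fun x : ℝ => (1 - x ^ δ) ^ n * δ * Q x) (uIcc (0:ℝ) 1) := by
    rw [uIcc_of_le zero_le_one]
    exact (((continuousOn_const.sub
      (continuousOn_id.rpow_const (fun _ _ => Or.inr hδ.1.le))).pow n).mul
      continuousOn_const).mul hQ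
  have h3 := h1.mul_continuousOn h2
  apply h3.congr
  intro x _
  ring

omit hδ in
lemma beta_eval {a : ℝ} (ha : 0 < a) (n : ℕ) :
    ∫ x in (0:ℝ)..1, x ^ a * (1-x) ^ n
      = (n.factorial : ℝ) / ∏ j ∈ Finset.range (n+1), (a + 1 + j) := by
  have hu : 0 < Complex.re ((a:ℂ) + 1) := by
    simp [Complex.add_re]
    linarith
  have hbeta := Complex.betaIntegral_eval_nat_add_one_right hu n
  rw [Complex.betaIntegral] at hbeta
  have hcongr : (∫ x : ℝ in (0:ℝ)..1, (x:ℂ) ^ ((a:ℂ) + 1 - 1) * (1 - (x:ℂ)) ^ (((n:ℂ)+1) - 1))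
      = ∫ x : ℝ in (0:ℝ)..1, ((x ^ a * (1-x) ^ n : ℝ) : ℂ) := by
    apply intervalIntegral.integral_congr
    intro x hx
    rw [uIcc_of_le zero_le_one] at hx
    have hx0 : (0:ℝ) ≤ x := hx.1
    show (x:ℂ) ^ ((a:ℂ) + 1 - 1) * (1 - (x:ℂ)) ^ ((n:ℂ) + 1 - 1) = ((x ^ a * (1-x) ^ n : ℝ) : ℂ)
    rw [show (a:ℂ) + 1 - 1 = (a:ℂ) by ring, show ((n:ℂ)+1) - 1 = (n:ℂ) by ring]
    rw [← Complex.ofReal_cpow hx0, Complex.cpow_natCast]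
    push_cast
    ring
  rw [hcongr, intervalIntegral.integral_ofReal] at hbeta
  have hprod : (∏ j ∈ Finset.range (n+1), ((a:ℂ) + 1 + (j:ℕ)))
      = ((∏ j ∈ Finset.range (n+1), (a + 1 + (j:ℕ)) : ℝ) : ℂ) := by
    push_cast
    rfl
  rw [hprod] at hbeta
  rw [show ((n.factorial : ℕ) : ℂ) = (((n.factorial : ℕ) : ℝ) : ℂ) by push_cast; rfl] at hbeta
  rw [← Complex.ofReal_div] at hbeta
  exact_mod_cast hbeta

lemma subst_rpow {G : ℝ → ℝ} (hG : ContinuousOn G (Icc (0:ℝ) 1)) :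
    ∫ x in (0:ℝ)..1, G (x ^ δ) * (δ * x ^ (δ-1)) = ∫ u in (0:ℝ)..1, G u := by
  have hδ0 := hδ.1
  have himg : ∀ x ∈ Icc (0:ℝ) 1, x ^ δ ∈ Icc (0:ℝ) 1 := by
    intro x hx
    exact ⟨Real.rpow_nonneg hx.1 _, Real.rpow_le_one hx.1 hx.2 hδ0.le⟩
  have h := intervalIntegral.integral_comp_mul_deriv''' (a := 0) (b := 1)
    (f := fun x => x ^ δ) (f' := fun x => δ * x ^ (δ-1)) (g := G)
    ?hf ?hff' ?hg_cont ?hg1 ?hg2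
  · rw [show ((0:ℝ) ^ δ) = 0 from Real.zero_rpow hδ0.ne', Real.one_rpow] at h
    rw [← h]
    apply intervalIntegral.integral_congr
    intro x hx
    simp only [Function.comp]
  case hf =>
    rw [uIcc_of_le zero_le_one]
    exact continuousOn_id.rpow_const (fun _ _ => Or.inr hδ0.le)
  case hff' =>
    intro x hx
    rw [min_eq_left zero_le_one, max_eq_right zero_le_one] at hx
    exact (Real.hasDerivAt_rpow_const (Or.inl hx.1.ne')).hasDerivWithinAt
  case hg_cont =>
    apply hG.mono
    intro u hu
    rw [min_eq_left zero_le_one, max_eq_right zero_le_one] at hu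
    obtain ⟨x, hx, rfl⟩ := hu
    exact himg x ⟨hx.1.le, hx.2.le⟩
  case hg1 =>
    apply (hG.integrableOn_Icc).mono_set
    intro u hu
    obtain ⟨x, hx, rfl⟩ := hu
    rw [uIcc_of_le zero_le_one] at hx
    exact himg x hx
  case hg2 =>
    rw [uIcc_of_le zero_le_one]
    have hii : IntervalIntegrable (fun x => (1 - x ^ δ) ^ 0 * δ * x ^ (δ-1) * G (x ^ δ))
        volume 0 1 := by
      apply w_mul_ii hδ
      apply hG.comp (continuousOn_id.rpow_const (fun _ _ => Or.inr hδ0.le))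
      intro x hx
      exact himg x hx
    have hii2 : IntervalIntegrable (fun x => (G ∘ fun x => x ^ δ) x * (δ * x ^ (δ-1)))
        volume 0 1 := by
      apply hii.congr
      intro x _
      simp only [Function.comp, pow_zero, one_mul]
      ring
    exact (intervalIntegrable_iff_integrableOn_Icc_of_le zero_le_one).mp hii2

lemma w_eval (k : ℕ) :
    ∫ x in (0:ℝ)..1, (1 - x ^ δ) ^ k * δ * x ^ (δ-1) = ((k:ℝ)+1)⁻¹ := by
  have hδ0 := hδ.1
  have hG : ContinuousOn (fun u : ℝ => (1-u) ^ k) (Icc (0:ℝ) 1) :=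
    (continuousOn_const.sub continuousOn_id).pow k
  have h1 : ∫ x in (0:ℝ)..1, (1 - x ^ δ) ^ k * δ * x ^ (δ-1)
      = ∫ x in (0:ℝ)..1, (fun u : ℝ => (1-u) ^ k) (x ^ δ) * (δ * x ^ (δ-1)) := by
    apply intervalIntegral.integral_congr
    intro x _
    ring
  rw [h1, subst_rpow hδ hG]
  have h2 := intervalIntegral.integral_comp_sub_left (a := (0:ℝ)) (b := 1)
      (fun t : ℝ => t ^ k) 1
  rw [h2]
  norm_num [integral_pow]

lemma wx_eval (k : ℕ) :
    ∫ x in (0:ℝ)..1, (1 - x ^ δ) ^ k * δ * x ^ (δ-1) * x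
      = (k.factorial : ℝ) / ∏ j ∈ Finset.range (k+1), (1/δ + 1 + j) := by
  have hδ0 := hδ.1
  have hG : ContinuousOn (fun u : ℝ => u ^ (1/δ) * (1-u) ^ k) (Icc (0:ℝ) 1) :=
    (continuousOn_id.rpow_const (fun _ _ => Or.inr (by positivity))).mul
      ((continuousOn_const.sub continuousOn_id).pow k)
  have h1 : ∫ x in (0:ℝ)..1, (1 - x ^ δ) ^ k * δ * x ^ (δ-1) * x
      = ∫ x in (0:ℝ)..1, (fun u : ℝ => u ^ (1/δ) * (1-u) ^ k) (x ^ δ) * (δ * x ^ (δ-1)) := by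
    apply intervalIntegral.integral_congr
    intro x hx
    rw [uIcc_of_le zero_le_one] at hx
    have hx0 : (0:ℝ) ≤ x := hx.1
    have hxx : (x ^ δ) ^ (1/δ) = x := by
      rw [← Real.rpow_mul hx0, mul_one_div, div_self hδ0.ne', Real.rpow_one]
    show (1 - x ^ δ) ^ k * δ * x ^ (δ-1) * x = (x ^ δ) ^ (1/δ) * (1 - x ^ δ) ^ k * (δ * x ^ (δ-1))
    rw [hxx]
    ring
  rw [h1, subst_rpow hδ hG, beta_eval (by positivity : (0:ℝ) < 1/δ) k]

end cont

end hδ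

end Stmt5Aux

/-- High-reliability asymptotics of the outage probability under `K`-BS coordination:
with `P(θ) := (K−1) ∫_0^1 (1−x^δ)^{K−2} δ x^{δ−1} C_κ(θx,1)^{−K} dx`,
`lim_{θ→0⁺} (1 − P(θ))/θ = (1/κ) · (K!/(1+1/δ)_{K−1}) · δ/(1−δ)`. -/
theorem stmt_5 (δ κ : ℝ) (K : ℕ) (hδ : δ ∈ Set.Ioo (0:ℝ) 1) (hκ : 1 ≤ κ) (hK : 2 ≤ K) :
    Tendsto
      (fun θ : ℝ =>
        (1 - ((K : ℝ) - 1) *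
            ∫ x in (0:ℝ)..1,
              (1 - x ^ δ) ^ (K - 2) * δ * x ^ (δ - 1) * Cκ δ κ (θ * x) 1 ^ (-(K : ℤ))) / θ)
      (nhdsWithin 0 (Set.Ioi 0))
      (nhds ((1 / κ) * ((K.factorial : ℝ) / risingFac (1 + 1 / δ) (K - 1)) * (δ / (1 - δ)))) := by
  obtain ⟨k, rfl⟩ : ∃ k, K = k + 2 := ⟨K - 2, by omega⟩
  clear hK
  have hδ0 := hδ.1
  have hδ1 := hδ.2
  have hd : (0:ℝ) < 1 - δ := by linarith
  have hk : (0:ℝ) < κ := one_pos.trans_le hκ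
  simp only [Nat.add_sub_cancel, zpow_neg, zpow_natCast,
    show ((k+2:ℕ):ℝ) - 1 = (k:ℝ)+1 from by push_cast; ring,
    show k + 2 - 1 = k + 1 from rfl]
  have hc1 : ((k:ℝ)+1) * (((k:ℝ)+1)⁻¹) = 1 := mul_inv_cancel₀ (by positivity)
  -- dominated convergence
  have hDCT : Tendsto
      (fun θ : ℝ => ∫ x in (0:ℝ)..1,
        ((k:ℝ)+1) * ((1 - x ^ δ) ^ k * δ * x ^ (δ-1))
          * ((1 - (Cκ δ κ (θ*x) 1 ^ (k+2))⁻¹)/θ))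
      (nhdsWithin 0 (Set.Ioi 0))
      (nhds (∫ x in (0:ℝ)..1,
        ((k:ℝ)+1) * ((1 - x ^ δ) ^ k * δ * x ^ (δ-1))
          * (((k+2:ℕ):ℝ) * (δ/((1-δ)*κ)) * x))) := by
    apply intervalIntegral.tendsto_integral_filter_of_dominated_convergence
      (bound := fun x => ((k:ℝ)+1) * ((1 - x ^ δ) ^ k * δ * x ^ (δ-1))
        * (((k+2:ℕ):ℝ) * (x/((1-δ)*κ))))
    · -- measurability
      filter_upwards [self_mem_nhdsWithin] with θ hθ
      have hθ' : (0:ℝ) < θ := hθ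
      have hmapsto : ∀ x ∈ Ioc (0:ℝ) 1, θ * x ∈ Ici (0:ℝ) := by
        intro x hx
        exact mul_nonneg hθ'.le hx.1.le
      have hCc : ContinuousOn (fun x : ℝ => Cκ δ κ (θ*x) 1) (Ioc 0 1) :=
        (Stmt5Aux.Cκ_contOn hδ hκ).comp
          ((continuous_const.mul continuous_id).continuousOn) hmapsto
      have hCne : ∀ x ∈ Ioc (0:ℝ) 1, Cκ δ κ (θ*x) 1 ^ (k+2) ≠ 0 := by
        intro x hx
        have h1 := Stmt5Aux.Cκ_ge_one hδ hκ (hmapsto x hx)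
        positivity
      have hcont : ContinuousOn (fun x : ℝ =>
          ((k:ℝ)+1) * ((1 - x ^ δ) ^ k * δ * x ^ (δ-1))
            * ((1 - (Cκ δ κ (θ*x) 1 ^ (k+2))⁻¹)/θ)) (Ioc 0 1) := by
        apply ContinuousOn.mul
        · apply continuousOn_const.mul
          apply ContinuousOn.mul
          · exact ((continuousOn_const.sub
              (continuousOn_id.rpow_const (fun _ _ => Or.inr hδ0.le))).pow k).mul
              continuousOn_const
          · exact continuousOn_id.rpow_const (fun x hx => Or.inl (ne_of_gt hx.1))
        · exact (continuousOn_const.sub ((hCc.pow _).inv₀ hCne)).div_const θ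
      rw [uIoc_of_le zero_le_one]
      exact hcont.aestronglyMeasurable measurableSet_Ioc
    · -- bound
      filter_upwards [self_mem_nhdsWithin] with θ hθ
      have hθ' : (0:ℝ) < θ := hθ
      apply Filter.Eventually.of_forall
      intro x hx
      rw [uIoc_of_le zero_le_one] at hx
      have hx0 : (0:ℝ) < x := hx.1
      have hs0 : (0:ℝ) ≤ θ * x := by positivity
      have hge := Stmt5Aux.Cκ_ge_one hδ hκ hs0
      have hle := Stmt5Aux.Cκ_le_lin hδ hκ hs0
      have hqle : (Cκ δ κ (θ*x) 1 ^ (k+2))⁻¹ ≤ 1 := by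
        rw [inv_le_one₀ (by positivity)]
        exact one_le_pow₀ hge
      have hq0 : (0:ℝ) < (Cκ δ κ (θ*x) 1 ^ (k+2))⁻¹ := by positivity
      have hbnd := Stmt5Aux.one_sub_pow_bound hge (k+2)
      have h2 : (1 - (Cκ δ κ (θ*x) 1 ^ (k+2))⁻¹)/θ ≤ ((k+2:ℕ):ℝ) * (x/((1-δ)*κ)) := by
        rw [div_le_iff₀ hθ']
        calc 1 - (Cκ δ κ (θ*x) 1 ^ (k+2))⁻¹
            ≤ ((k+2:ℕ):ℝ) * (Cκ δ κ (θ*x) 1 - 1) := hbnd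
          _ ≤ ((k+2:ℕ):ℝ) * ((θ*x/(1-δ))/κ) := by
              have : Cκ δ κ (θ*x) 1 - 1 ≤ (θ*x/(1-δ))/κ := by linarith
              have hkk : (0:ℝ) ≤ ((k+2:ℕ):ℝ) := by positivity
              nlinarith
          _ = ((k+2:ℕ):ℝ) * (x/((1-δ)*κ)) * θ := by field_simp
      have hw0 : (0:ℝ) ≤ ((k:ℝ)+1) * ((1 - x ^ δ) ^ k * δ * x ^ (δ-1)) := by
        have hx1 : x ^ δ ≤ 1 := Real.rpow_le_one hx0.le hx.2 hδ0.le
        have : (0:ℝ) ≤ (1 - x ^ δ) ^ k := pow_nonneg (by linarith) k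
        have h3 : (0:ℝ) ≤ x ^ (δ-1) := Real.rpow_nonneg hx0.le _
        positivity
      rw [Real.norm_eq_abs, abs_of_nonneg]
      · exact mul_le_mul_of_nonneg_left h2 hw0
      · apply mul_nonneg hw0
        apply div_nonneg _ hθ'.le
        linarith
    · -- bound integrable
      have hQ : ContinuousOn (fun x : ℝ => ((k:ℝ)+1) * (((k+2:ℕ):ℝ) * (x/((1-δ)*κ))))
          (Icc 0 1) :=
        continuousOn_const.mul (continuousOn_const.mul ((continuousOn_id.div_const _)))
      have h := Stmt5Aux.w_mul_ii hδ (n := k) hQ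
      apply h.congr
      intro x _
      ring
    · -- pointwise limit
      apply Filter.Eventually.of_forall
      intro x hx
      rw [uIoc_of_le zero_le_one] at hx
      exact Tendsto.const_mul _ (Stmt5Aux.pointwise_lim hδ hκ (k+2) hx)
  -- value of the limit integral
  have hval : (∫ x in (0:ℝ)..1,
      ((k:ℝ)+1) * ((1 - x ^ δ) ^ k * δ * x ^ (δ-1))
        * (((k+2:ℕ):ℝ) * (δ/((1-δ)*κ)) * x))
      = (1 / κ) * (((k+2).factorial : ℝ) / risingFac (1 + 1 / δ) (k+1)) * (δ / (1 - δ)) := by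
    have h1 : (∫ x in (0:ℝ)..1,
        ((k:ℝ)+1) * ((1 - x ^ δ) ^ k * δ * x ^ (δ-1))
          * (((k+2:ℕ):ℝ) * (δ/((1-δ)*κ)) * x))
        = (((k:ℝ)+1) * (((k+2:ℕ):ℝ) * (δ/((1-δ)*κ))))
          * ∫ x in (0:ℝ)..1, (1 - x ^ δ) ^ k * δ * x ^ (δ-1) * x := by
      rw [← intervalIntegral.integral_const_mul]
      apply intervalIntegral.integral_congr
      intro x _
      ring
    rw [h1, Stmt5Aux.wx_eval hδ k]
    have hPR : risingFac (1 + 1 / δ) (k+1) = ∏ j ∈ Finset.range (k+1), (1/δ + 1 + j) := by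
      unfold risingFac
      apply Finset.prod_congr rfl
      intro j _
      ring
    have hPpos : (0:ℝ) < ∏ j ∈ Finset.range (k+1), (1/δ + 1 + j) := by
      apply Finset.prod_pos
      intro j _
      positivity
    have hfact : (((k+2).factorial : ℕ) : ℝ)
        = ((k+2:ℕ):ℝ) * (((k:ℝ)+1) * (k.factorial : ℝ)) := by
      rw [show k + 2 = (k+1) + 1 from rfl, Nat.factorial_succ, Nat.factorial_succ]
      push_cast
      ring
    rw [hPR, hfact]
    field_simp
  rw [← hval]
  apply hDCT.congr'
  filter_upwards [self_mem_nhdsWithin] with θ hθ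
  have hθ' : (0:ℝ) < θ := hθ
  have hQc : ContinuousOn (fun x : ℝ => (Cκ δ κ (θ*x) 1 ^ (k+2))⁻¹) (Icc 0 1) := by
    have hmapsto : ∀ x ∈ Icc (0:ℝ) 1, θ * x ∈ Ici (0:ℝ) := by
      intro x hx
      exact mul_nonneg hθ'.le hx.1
    have hCc : ContinuousOn (fun x : ℝ => Cκ δ κ (θ*x) 1) (Icc 0 1) :=
      (Stmt5Aux.Cκ_contOn hδ hκ).comp
        ((continuous_const.mul continuous_id).continuousOn) hmapsto
    apply (hCc.pow _).inv₀
    intro x hx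
    have h1 := Stmt5Aux.Cκ_ge_one hδ hκ (hmapsto x hx)
    exact pow_ne_zero _ (ne_of_gt (by linarith))
  have hint2 : IntervalIntegrable
      (fun x => (1 - x ^ δ) ^ k * δ * x ^ (δ-1) * (Cκ δ κ (θ*x) 1 ^ (k+2))⁻¹) volume 0 1 :=
    Stmt5Aux.w_mul_ii hδ hQc
  have hint1 : IntervalIntegrable
      (fun x => (1 - x ^ δ) ^ k * δ * x ^ (δ-1)) volume 0 1 := by
    have h := Stmt5Aux.w_mul_ii hδ (n := k) (Q := fun _ => (1:ℝ)) continuousOn_const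
    apply h.congr
    intro x _
    ring
  have hw := Stmt5Aux.w_eval hδ k
  show (∫ x in (0:ℝ)..1,
      ((k:ℝ)+1) * ((1 - x ^ δ) ^ k * δ * x ^ (δ-1))
        * ((1 - (Cκ δ κ (θ*x) 1 ^ (k+2))⁻¹)/θ))
    = (1 - ((k:ℝ)+1) * ∫ x in (0:ℝ)..1,
        (1 - x ^ δ) ^ k * δ * x ^ (δ - 1) * (Cκ δ κ (θ * x) 1 ^ (k+2))⁻¹) / θ
  have hsplit : (fun x : ℝ =>
      ((k:ℝ)+1) * ((1 - x ^ δ) ^ k * δ * x ^ (δ-1))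
        * ((1 - (Cκ δ κ (θ*x) 1 ^ (k+2))⁻¹)/θ))
      = fun x : ℝ => (((k:ℝ)+1)/θ) *
        ((1 - x ^ δ) ^ k * δ * x ^ (δ-1)
          - (1 - x ^ δ) ^ k * δ * x ^ (δ-1) * (Cκ δ κ (θ*x) 1 ^ (k+2))⁻¹) := by
    funext x
    ring
  rw [hsplit, intervalIntegral.integral_const_mul,
    intervalIntegral.integral_sub hint1 hint2, hw]
  field_simp
  ring
end

section
/- Fix δ ∈ (0,1) and a positive integer m. Then lim_{θ→∞} θ^δ / C₁(θ,m) = Γ(m) / (Γ(1−δ) Γ(m+δ)), where Γ is the Gamma function. -/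
open MeasureTheory Real Set Filter

/-- For `δ ∈ (0,1)` and a positive integer `m`,
`lim_{θ→∞} θ^δ / C₁(θ,m) = Γ(m) / (Γ(1−δ) Γ(m+δ))`. -/
theorem stmt_9 (δ : ℝ) (m : ℕ) (hδ : δ ∈ Set.Ioo (0:ℝ) 1) (hm : 0 < m) :
    Tendsto (fun θ : ℝ => θ ^ δ / C1 δ θ m) atTop
      (nhds (Real.Gamma m / (Real.Gamma (1 - δ) * Real.Gamma (m + δ)))) := by
  obtain ⟨hδ0, hδ1⟩ := hδ
  have hm1 : (1:ℝ) ≤ (m:ℝ) := by exact_mod_cast hm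
  set f : ℝ → ℝ := fun y => y ^ ((m : ℝ) + δ - 1) * (1 - y) ^ (-δ) with hfdef
  set u : ℂ := (((m:ℝ) + δ : ℝ) : ℂ) with hu_def
  set v : ℂ := ((1 - δ : ℝ) : ℂ) with hv_def
  have hu : 0 < u.re := by simp [hu_def]; linarith
  have hv : 0 < v.re := by simp [hv_def]; linarith
  have key : EqOn (fun x : ℝ => (x : ℂ) ^ (u - 1) * (1 - (x : ℂ)) ^ (v - 1))
      (fun x : ℝ => ((f x : ℝ) : ℂ)) (uIcc (0:ℝ) 1) := by
    intro x hx
    rw [uIcc_of_le zero_le_one] at hx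
    obtain ⟨hx0, hx1⟩ := hx
    have e1 : u - 1 = (((m:ℝ) + δ - 1 : ℝ) : ℂ) := by rw [hu_def]; push_cast; ring
    have e2 : v - 1 = ((-δ : ℝ) : ℂ) := by rw [hv_def]; push_cast; ring
    have e3 : (1 : ℂ) - (x : ℂ) = ((1 - x : ℝ) : ℂ) := by push_cast; ring
    simp only [e1, e2, e3, hfdef]
    rw [← Complex.ofReal_cpow hx0, ← Complex.ofReal_cpow (by linarith), ← Complex.ofReal_mul]
  have hintC : IntervalIntegrable (fun x : ℝ => (x : ℂ) ^ (u - 1) * (1 - (x : ℂ)) ^ (v - 1))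
      volume 0 1 := Complex.betaIntegral_convergent hu hv
  have hintC' : IntervalIntegrable (fun x : ℝ => ((f x : ℝ) : ℂ)) volume 0 1 := by
    refine hintC.congr_ae ?_
    refine (ae_restrict_iff' measurableSet_uIoc).mpr (ae_of_all _ fun x hx => ?_)
    exact key (uIoc_subset_uIcc hx)
  have hfi : IntervalIntegrable f volume 0 1 := by
    rw [intervalIntegrable_iff] at hintC' ⊢
    exact hintC'.re
  set J : ℝ := ∫ y in (0:ℝ)..1, f y with hJ_def
  have hbetaJ : Complex.betaIntegral u v = (J : ℂ) := by
    rw [Complex.betaIntegral, intervalIntegral.integral_congr key, hJ_def]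
    exact intervalIntegral.integral_ofReal
  have hΓm1 : 0 < Real.Gamma ((m:ℝ) + 1) := Real.Gamma_pos_of_pos (by linarith)
  have hΓm : 0 < Real.Gamma (m:ℝ) := Real.Gamma_pos_of_pos (by linarith)
  have hΓ1δ : 0 < Real.Gamma (1 - δ) := Real.Gamma_pos_of_pos (by linarith)
  have hΓmδ : 0 < Real.Gamma ((m:ℝ) + δ) := Real.Gamma_pos_of_pos (by linarith)
  have hval : J = Real.Gamma ((m:ℝ) + δ) * Real.Gamma (1 - δ) / Real.Gamma ((m:ℝ) + 1) := by
    have h2 := Complex.Gamma_mul_Gamma_eq_betaIntegral hu hv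
    have huv : u + v = (((m:ℝ) + 1 : ℝ) : ℂ) := by rw [hu_def, hv_def]; push_cast; ring
    rw [hbetaJ, huv, hu_def, hv_def, Complex.Gamma_ofReal, Complex.Gamma_ofReal,
      Complex.Gamma_ofReal, ← Complex.ofReal_mul, ← Complex.ofReal_mul] at h2
    have h3 : Real.Gamma ((m:ℝ) + δ) * Real.Gamma (1 - δ) = Real.Gamma ((m:ℝ) + 1) * J :=
      by exact_mod_cast h2
    field_simp
    linarith [h3]
  -- limit of the integral term
  have hg : Tendsto (fun θ : ℝ => ∫ y in (1/(1+θ))..1, f y) atTop (nhds J) := by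
    have hc : ContinuousOn (fun a : ℝ => ∫ y in a..1, f y) (uIcc (0:ℝ) 1) :=
      intervalIntegral.continuousOn_primitive_interval_left ((intervalIntegrable_iff').mp hfi)
    have h0 : (0:ℝ) ∈ uIcc (0:ℝ) 1 := left_mem_uIcc
    have hcw := hc 0 h0
    have hJ0 : (∫ y in (0:ℝ)..1, f y) = J := rfl
    rw [ContinuousWithinAt, hJ0] at hcw
    refine hcw.comp ?_
    rw [tendsto_nhdsWithin_iff]
    constructor
    · have h1 : Tendsto (fun θ : ℝ => 1 + θ) atTop atTop :=
        tendsto_atTop_add_const_left atTop 1 tendsto_id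
      simpa [one_div, Function.comp_def] using tendsto_inv_atTop_zero.comp h1
    · filter_upwards [eventually_ge_atTop (0:ℝ)] with θ hθ
      rw [uIcc_of_le zero_le_one]
      constructor
      · positivity
      · rw [div_le_one (by linarith)]; linarith
  have hsmall : Tendsto (fun θ : ℝ => (1+θ) ^ (-(m:ℝ)) * θ ^ (-δ)) atTop (nhds 0) := by
    have h1p : Tendsto (fun θ : ℝ => 1 + θ) atTop atTop :=
      tendsto_atTop_add_const_left atTop 1 tendsto_id
    have h1 : Tendsto (fun θ : ℝ => (1+θ) ^ (-(m:ℝ))) atTop (nhds 0) :=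
      (tendsto_rpow_neg_atTop (by positivity)).comp h1p
    have h2 : Tendsto (fun θ : ℝ => θ ^ (-δ)) atTop (nhds 0) := tendsto_rpow_neg_atTop hδ0
    simpa using h1.mul h2
  have hmain : Tendsto (fun θ : ℝ => C1 δ θ m / θ ^ δ) atTop (nhds ((m:ℝ) * J)) := by
    have := hsmall.add (hg.const_mul (m:ℝ))
    rw [zero_add] at this
    refine this.congr' ?_
    filter_upwards [eventually_gt_atTop (0:ℝ)] with θ hθ
    have hθδ : (0:ℝ) < θ ^ δ := Real.rpow_pos_of_pos hθ δ
    rw [C1, add_div]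
    congr 1
    · rw [Real.rpow_neg hθ.le, div_eq_mul_inv]
    · field_simp
      ring
  have hLne : (m:ℝ) * J ≠ 0 := by
    rw [hval]
    have hm0 : (0:ℝ) < (m:ℝ) := by linarith
    positivity
  have := hmain.inv₀ hLne
  have hfun : (fun θ : ℝ => (C1 δ θ m / θ ^ δ)⁻¹) = fun θ : ℝ => θ ^ δ / C1 δ θ m := by
    funext θ; rw [inv_div]
  rw [hfun] at this
  convert this using 2
  rw [hval, Real.Gamma_add_one (by positivity : (m:ℝ) ≠ 0)]
  have hm0 : (0:ℝ) < (m:ℝ) := by linarith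
  field_simp
end

section
/- Fix δ ∈ (0,1) and a positive integer M. For θ > 0 define P(θ) := Σ_{m=1}^M (−1)^{m+1} (M choose m) / C₁(θ,m). Then lim_{θ→∞} θ^δ P(θ) = b_M, where b_M := Σ_{m=1}^M (−1)^{m+1} (M choose m) Γ(m) / (Γ(1−δ) Γ(m+δ)) and Γ is the Gamma function. -/
open MeasureTheory Real Set Filter

lemma beta_intervalIntegrable {p q : ℝ} (hp : -1 < p) (hq : -1 < q) :
    IntervalIntegrable (fun y : ℝ => y ^ p * (1 - y) ^ q) volume 0 1 := by
  have h1 : IntervalIntegrable (fun y : ℝ => y ^ p * (1 - y) ^ q) volume 0 (1/2) := by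
    apply (intervalIntegral.intervalIntegrable_rpow' hp).mul_continuousOn
    apply ContinuousOn.rpow_const (by fun_prop)
    intro x hx
    rw [Set.uIcc_of_le (by norm_num)] at hx
    left
    intro h
    rw [sub_eq_zero] at h
    linarith [hx.2]
  have h2 : IntervalIntegrable (fun y : ℝ => y ^ p * (1 - y) ^ q) volume (1/2) 1 := by
    have hInt : IntervalIntegrable (fun x : ℝ => (1 - x) ^ q) volume (1/2) 1 := by
      have := (intervalIntegral.intervalIntegrable_rpow' hq (a := 0) (b := 1/2)).comp_sub_left 1
      norm_num at this
      exact this.symm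
    apply hInt.continuousOn_mul
    apply ContinuousOn.rpow_const (by fun_prop)
    intro x hx
    rw [Set.uIcc_of_le (by norm_num)] at hx
    left
    intro h
    rw [h] at hx
    linarith [hx.1]
  exact h1.trans h2

lemma beta_value {p q : ℝ} (hp : 0 < p) (hq : 0 < q) :
    ∫ y in (0:ℝ)..1, y ^ (p - 1) * (1 - y) ^ (q - 1) =
      Real.Gamma p * Real.Gamma q / Real.Gamma (p + q) := by
  have key := Complex.Gamma_mul_Gamma_eq_betaIntegral (s := (p:ℂ)) (t := (q:ℂ))
    (by simpa using hp) (by simpa using hq)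
  have hbeta : Complex.betaIntegral p q =
      ((∫ y in (0:ℝ)..1, y ^ (p - 1) * (1 - y) ^ (q - 1)) : ℝ) := by
    rw [Complex.betaIntegral, ← intervalIntegral.integral_ofReal]
    apply intervalIntegral.integral_congr
    intro x hx
    rw [Set.uIcc_of_le (by norm_num)] at hx
    push_cast
    rw [Complex.ofReal_cpow hx.1, Complex.ofReal_cpow (by linarith [hx.2])]
    push_cast
    ring
  rw [hbeta] at key
  have hppq : (0:ℝ) < Real.Gamma (p + q) := Real.Gamma_pos_of_pos (by linarith)
  have : ((Real.Gamma p * Real.Gamma q : ℝ) : ℂ) =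
      ((Real.Gamma (p + q) * ∫ y in (0:ℝ)..1, y ^ (p - 1) * (1 - y) ^ (q - 1) : ℝ) : ℂ) := by
    push_cast
    rw [← Complex.Gamma_ofReal, ← Complex.Gamma_ofReal, ← Complex.Gamma_ofReal] at *
    push_cast at key ⊢
    exact key
  have h2 := Complex.ofReal_injective this
  field_simp
  linarith [h2]

lemma key_tendsto (δ : ℝ) (hδ : δ ∈ Set.Ioo (0:ℝ) 1) (m : ℕ) (hm : 1 ≤ m) :
    Tendsto (fun θ : ℝ => θ ^ δ / C1 δ θ m) atTop
      (nhds (Real.Gamma m / (Real.Gamma (1 - δ) * Real.Gamma ((m:ℝ) + δ)))) := by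
  obtain ⟨hδ1, hδ2⟩ := hδ
  have hm1 : (1:ℝ) ≤ (m:ℝ) := by exact_mod_cast hm
  set f : ℝ → ℝ := fun y => y ^ ((m:ℝ) + δ - 1) * (1 - y) ^ (-δ) with hf
  have hInt : IntervalIntegrable f volume 0 1 :=
    beta_intervalIntegrable (by linarith) (by linarith)
  set B : ℝ := ∫ y in (0:ℝ)..1, f y with hBdef
  have hBval : B = Real.Gamma ((m:ℝ) + δ) * Real.Gamma (1 - δ) / Real.Gamma ((m:ℝ) + 1) := by
    have := beta_value (p := (m:ℝ) + δ) (q := 1 - δ) (by linarith) (by linarith)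
    rw [hBdef]
    show ∫ y in (0:ℝ)..1, y ^ ((m:ℝ) + δ - 1) * (1 - y) ^ (-δ) = _
    convert this using 3 <;> ring_nf
  have hΓmδ : 0 < Real.Gamma ((m:ℝ) + δ) := Real.Gamma_pos_of_pos (by linarith)
  have hΓ1δ : 0 < Real.Gamma (1 - δ) := Real.Gamma_pos_of_pos (by linarith)
  have hΓm1 : 0 < Real.Gamma ((m:ℝ) + 1) := Real.Gamma_pos_of_pos (by linarith)
  have hΓm : 0 < Real.Gamma (m:ℝ) := Real.Gamma_pos_of_pos (by linarith)
  have hBpos : 0 < B := by rw [hBval]; positivity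
  -- continuity of the primitive
  set G : ℝ → ℝ := fun x => ∫ y in x..1, f y with hG
  have hIntOn : IntegrableOn f (Set.uIcc (0:ℝ) 1) volume := by
    rw [Set.uIcc_of_le (by norm_num)]
    rw [integrableOn_Icc_iff_integrableOn_Ioc]
    exact hInt.1
  have hGcont : ContinuousOn G (Set.uIcc (0:ℝ) 1) :=
    intervalIntegral.continuousOn_primitive_interval_left hIntOn
  have hGcwa : ContinuousWithinAt G (Set.Icc (0:ℝ) 1) 0 := by
    have := hGcont 0 (by rw [Set.uIcc_of_le (by norm_num)]; exact ⟨le_rfl, by norm_num⟩)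
    rwa [Set.uIcc_of_le (by norm_num)] at this
  -- a(θ) = 1/(1+θ) → 0 within Icc 0 1
  have ha_tends : Tendsto (fun θ : ℝ => 1 / (1 + θ)) atTop (nhds 0) := by
    apply Tendsto.div_atTop tendsto_const_nhds
    exact tendsto_atTop_add_const_left _ 1 tendsto_id
  have ha_mem : ∀ᶠ θ : ℝ in atTop, 1 / (1 + θ) ∈ Set.Icc (0:ℝ) 1 := by
    filter_upwards [eventually_ge_atTop (0:ℝ)] with θ hθ
    constructor
    · positivity
    · rw [div_le_one (by linarith)]; linarith
  have hGa : Tendsto (fun θ : ℝ => G (1 / (1 + θ))) atTop (nhds B) := by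
    have h0 : G 0 = B := rfl
    rw [← h0]
    exact hGcwa.tendsto.comp
      (tendsto_nhdsWithin_of_tendsto_nhds_of_eventually_within _ ha_tends ha_mem)
  -- the denominator
  set D : ℝ → ℝ := fun θ => θ ^ (-δ) * (1 + θ) ^ (-(m:ℝ)) + m * G (1 / (1 + θ)) with hD
  have hD_tends : Tendsto D atTop (nhds ((m:ℝ) * B)) := by
    have h1 : Tendsto (fun θ : ℝ => θ ^ (-δ) * (1 + θ) ^ (-(m:ℝ))) atTop (nhds 0) := by
      have ha := tendsto_rpow_neg_atTop hδ1
      have hb : Tendsto (fun θ : ℝ => (1 + θ) ^ (-(m:ℝ))) atTop (nhds 0) :=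
        (tendsto_rpow_neg_atTop (by linarith : (0:ℝ) < (m:ℝ))).comp
          (tendsto_atTop_add_const_left _ 1 tendsto_id)
      simpa using ha.mul hb
    have h2 : Tendsto (fun θ : ℝ => (m:ℝ) * G (1 / (1 + θ))) atTop (nhds ((m:ℝ) * B)) :=
      hGa.const_mul _
    simpa only [zero_add] using h1.add h2
  have hmB : (m:ℝ) * B ≠ 0 := ne_of_gt (mul_pos (by linarith) hBpos)
  have hInv : Tendsto (fun θ : ℝ => 1 / D θ) atTop (nhds (1 / ((m:ℝ) * B))) :=
    tendsto_const_nhds.div hD_tends hmB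
  have heq : (fun θ : ℝ => θ ^ δ / C1 δ θ m) =ᶠ[atTop] fun θ => 1 / D θ := by
    filter_upwards [eventually_gt_atTop (0:ℝ)] with θ hθ
    have hθδ : (0:ℝ) < θ ^ δ := Real.rpow_pos_of_pos hθ δ
    have hC1 : C1 δ θ m = θ ^ δ * D θ := by
      have h1 : θ ^ δ * θ ^ (-δ) = 1 := by
        rw [← Real.rpow_add hθ]; simp
      show (1 + θ) ^ (-(m:ℝ)) + m * θ ^ δ * (∫ y in (1/(1+θ))..1, f y)
          = θ ^ δ * (θ ^ (-δ) * (1 + θ) ^ (-(m:ℝ)) + m * G (1/(1+θ)))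
      have hGg : G (1/(1+θ)) = ∫ y in (1/(1+θ))..1, f y := rfl
      rw [hGg, mul_add, ← mul_assoc, h1, one_mul]; ring
    rw [hC1, div_mul_cancel_left₀ (ne_of_gt hθδ), one_div]
  have hmain := Filter.Tendsto.congr' heq.symm hInv
  have hval : 1 / ((m:ℝ) * B) =
      Real.Gamma (m:ℝ) / (Real.Gamma (1 - δ) * Real.Gamma ((m:ℝ) + δ)) := by
    have hΓadd : Real.Gamma ((m:ℝ) + 1) = (m:ℝ) * Real.Gamma (m:ℝ) :=
      Real.Gamma_add_one (by linarith)
    rw [hBval, hΓadd]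
    have hm0 : (0:ℝ) < (m:ℝ) := by linarith
    field_simp
  rwa [hval] at hmain

/-- High-spectral-efficiency asymptotics of the coverage probability under `M`-RB
selection combining: with `P(θ) := Σ_{m=1}^M (−1)^{m+1} (M choose m) / C₁(θ,m)`,
`lim_{θ→∞} θ^δ P(θ) = b_M := Σ_{m=1}^M (−1)^{m+1} (M choose m) Γ(m)/(Γ(1−δ)Γ(m+δ))`. -/
theorem stmt_10 (δ : ℝ) (M : ℕ) (hδ : δ ∈ Set.Ioo (0:ℝ) 1) (hM : 0 < M) :
    Tendsto
      (fun θ : ℝ =>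
        θ ^ δ * ∑ m ∈ Finset.Icc 1 M, (-1 : ℝ) ^ (m + 1) * (M.choose m : ℝ) / C1 δ θ m)
      atTop
      (nhds (∑ m ∈ Finset.Icc 1 M,
        (-1 : ℝ) ^ (m + 1) * (M.choose m : ℝ) * Real.Gamma m /
          (Real.Gamma (1 - δ) * Real.Gamma (m + δ)))) := by
  have h : ∀ m ∈ Finset.Icc 1 M,
      Tendsto (fun θ : ℝ => θ ^ δ * ((-1 : ℝ) ^ (m + 1) * (M.choose m : ℝ) / C1 δ θ m)) atTop
        (nhds ((-1 : ℝ) ^ (m + 1) * (M.choose m : ℝ) * Real.Gamma m /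
          (Real.Gamma (1 - δ) * Real.Gamma (m + δ)))) := by
    intro m hm
    have hk := (key_tendsto δ hδ m (Finset.mem_Icc.mp hm).1).const_mul
      ((-1 : ℝ) ^ (m + 1) * (M.choose m : ℝ))
    have h3 : (fun θ : ℝ => (-1 : ℝ) ^ (m + 1) * (M.choose m : ℝ) * (θ ^ δ / C1 δ θ m))
        = fun θ : ℝ => θ ^ δ * ((-1 : ℝ) ^ (m + 1) * (M.choose m : ℝ) / C1 δ θ m) := by
      funext θ; ring
    rw [h3, mul_div_assoc'] at hk
    exact hk
  have hsum := tendsto_finset_sum (Finset.Icc 1 M) h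
  simp only [← Finset.mul_sum] at hsum
  exact hsum
end

section
/- Let c be a nonzero real number, M a nonnegative integer and k a nonnegative integer. Then the k-th derivative at u = 0 of the function u ↦ (1 − 1/(c(1+u)))^M (defined on a neighborhood of 0 where 1+u ≠ 0) equals Σ_{j=0}^{k} (M choose j) (k choose j) j! (M)_{k−j} (−1)^{k−j} (1 − 1/c)^{M−j}, where (x)_n := x(x+1)⋯(x+n−1) is the rising factorial with (x)_0 := 1 and (M choose j) := 0 for j > M. -/
open Real Set

noncomputable def Gfun (c : ℝ) (M j : ℕ) (u : ℝ) : ℝ :=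
  (M.descFactorial j : ℝ) * c ^ j * (c * u + (c - 1)) ^ (M - j)

noncomputable def Hfun (c : ℝ) (M i : ℕ) (u : ℝ) : ℝ :=
  (-1 : ℝ) ^ i * risingFac (M : ℝ) i * (c ^ M)⁻¹ * (1 + u) ^ (-(M : ℤ) - i)

lemma hG (c : ℝ) (M j : ℕ) (u : ℝ) :
    HasDerivAt (Gfun c M j) (Gfun c M (j + 1) u) u := by
  have h1 : HasDerivAt (fun u : ℝ => c * u + (c - 1)) c u := by
    simpa using ((hasDerivAt_id u).const_mul c).add_const (c - 1)
  have h2 := (h1.pow (M - j)).const_mul ((M.descFactorial j : ℝ) * c ^ j)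
  refine HasDerivAt.congr_deriv h2 ?_
  simp only [Gfun, Nat.descFactorial_succ, Nat.cast_mul]
  rw [show M - (j + 1) = M - j - 1 from by omega]
  ring

lemma hH (c : ℝ) (M i : ℕ) (u : ℝ) (hu : 1 + u ≠ 0) :
    HasDerivAt (Hfun c M i) (Hfun c M (i + 1) u) u := by
  have h1 : HasDerivAt (fun u : ℝ => 1 + u) 1 u := by
    simpa using (hasDerivAt_id u).const_add 1
  have h2 := (hasDerivAt_zpow (-(M : ℤ) - i) (1 + u) (Or.inl hu)).comp u h1
  have h3 := h2.const_mul ((-1 : ℝ) ^ i * risingFac (M : ℝ) i * (c ^ M)⁻¹)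
  refine HasDerivAt.congr_deriv h3 ?_
  simp only [Hfun, Function.comp]
  rw [show risingFac (M : ℝ) (i + 1) = risingFac (M : ℝ) i * ((M : ℝ) + i) from
    Finset.prod_range_succ _ _]
  rw [show -(M : ℤ) - ((i : ℕ) + 1 : ℕ) = -(M : ℤ) - i - 1 from by push_cast; ring]
  push_cast
  ring

lemma key (c : ℝ) (hc : c ≠ 0) (M : ℕ) : ∀ k : ℕ, ∀ u : ℝ, 1 + u ≠ 0 →
    iteratedDeriv k (fun u : ℝ => (1 - 1 / (c * (1 + u))) ^ M) u
      = ∑ j ∈ Finset.range (k + 1), (k.choose j : ℝ) * (Gfun c M j u * Hfun c M (k - j) u) := by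
  intro k
  induction k with
  | zero =>
    intro u hu
    have h0 : (1 : ℝ) - 1 / (c * (1 + u)) = (c * u + (c - 1)) * (c⁻¹ * (1 + u)⁻¹) := by
      field_simp
      ring
    rw [iteratedDeriv_zero, Finset.sum_range_one, h0, mul_pow, mul_pow]
    simp only [Gfun, Hfun, risingFac, Nat.sub_self, Nat.sub_zero, Nat.choose_self, Nat.cast_one,
      one_mul, Nat.descFactorial_zero, pow_zero, Finset.range_zero, Finset.prod_empty,
      Nat.cast_zero, sub_zero, zpow_neg, zpow_natCast, inv_pow]
  | succ k ih =>
    intro u hu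
    have hU : IsOpen {v : ℝ | 1 + v ≠ 0} :=
      isOpen_compl_singleton.preimage (continuous_const.add continuous_id)
    have hev : iteratedDeriv k (fun u : ℝ => (1 - 1 / (c * (1 + u))) ^ M)
        =ᶠ[nhds u] fun v => ∑ j ∈ Finset.range (k + 1),
          (k.choose j : ℝ) * (Gfun c M j v * Hfun c M (k - j) v) :=
      Filter.eventuallyEq_of_mem (hU.mem_nhds hu) ih
    rw [iteratedDeriv_succ, hev.deriv_eq]
    have hderiv : HasDerivAt (fun v => ∑ j ∈ Finset.range (k + 1),
        (k.choose j : ℝ) * (Gfun c M j v * Hfun c M (k - j) v))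
        (∑ j ∈ Finset.range (k + 1), (k.choose j : ℝ) *
          (Gfun c M (j + 1) u * Hfun c M (k - j) u + Gfun c M j u * Hfun c M (k - j + 1) u)) u := by
      apply HasDerivAt.fun_sum
      intro j _
      exact ((hG c M j u).mul (hH c M (k - j) u hu)).const_mul _
    rw [hderiv.deriv]
    set b : ℕ → ℝ := fun j => Gfun c M j u * Hfun c M (k + 1 - j) u with hb
    have e1 : ∀ j ∈ Finset.range (k + 1),
        (k.choose j : ℝ) *
          (Gfun c M (j + 1) u * Hfun c M (k - j) u + Gfun c M j u * Hfun c M (k - j + 1) u)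
        = (k.choose j : ℝ) * b (j + 1) + (k.choose j : ℝ) * b j := by
      intro j hj
      simp only [Finset.mem_range] at hj
      simp only [hb]
      rw [show k + 1 - (j + 1) = k - j from by omega, show k + 1 - j = k - j + 1 from by omega]
      ring
    rw [Finset.sum_congr rfl e1, Finset.sum_add_distrib]
    have e2 : ∑ j ∈ Finset.range (k + 2), ((k + 1).choose j : ℝ) * b j
        = ∑ j ∈ Finset.range (k + 1), (k.choose j : ℝ) * b (j + 1)
          + ∑ j ∈ Finset.range (k + 1), (k.choose j : ℝ) * b j := by
      rw [Finset.sum_range_succ' (fun j => ((k + 1).choose j : ℝ) * b j) (k + 1)]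
      have e3 : ∀ j ∈ Finset.range (k + 1),
          (((k + 1).choose (j + 1) : ℕ) : ℝ) * b (j + 1)
          = (k.choose j : ℝ) * b (j + 1) + (k.choose (j + 1) : ℝ) * b (j + 1) := by
        intro j _
        rw [Nat.choose_succ_succ]
        push_cast
        ring
      rw [Finset.sum_congr rfl e3, Finset.sum_add_distrib]
      have e4 : ∑ j ∈ Finset.range (k + 1), (k.choose (j + 1) : ℝ) * b (j + 1)
            + ((k + 1).choose 0 : ℝ) * b 0
          = ∑ j ∈ Finset.range (k + 1), (k.choose j : ℝ) * b j := by
        have e5 := Finset.sum_range_succ' (fun j => (k.choose j : ℝ) * b j) (k + 1)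
        rw [Finset.sum_range_succ (fun j => (k.choose j : ℝ) * b j) (k + 1)] at e5
        simp only [Nat.choose_succ_self, Nat.cast_zero, zero_mul, add_zero,
          Nat.choose_zero_right, Nat.cast_one, one_mul] at e5 ⊢
        linarith [e5]
      linarith [e4]
    rw [e2]

/-- For a nonzero real `c` and nonnegative integers `M`, `k`, the `k`-th derivative at
`u = 0` of `u ↦ (1 − 1/(c(1+u)))^M` equals
`Σ_{j=0}^{k} (M choose j) (k choose j) j! (M)_{k−j} (−1)^{k−j} (1 − 1/c)^{M−j}`
(with `(M choose j) = 0` for `j > M`). -/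
theorem stmt_12 (c : ℝ) (hc : c ≠ 0) (M k : ℕ) :
    iteratedDeriv k (fun u : ℝ => (1 - 1 / (c * (1 + u))) ^ M) 0
      = ∑ j ∈ Finset.range (k + 1),
          (M.choose j : ℝ) * (k.choose j : ℝ) * (j.factorial : ℝ) *
            risingFac (M : ℝ) (k - j) * (-1) ^ (k - j) * (1 - 1 / c) ^ (M - j) := by
  rw [key c hc M k 0 (by norm_num)]
  apply Finset.sum_congr rfl
  intro j _
  simp only [Gfun, Hfun, mul_zero, zero_add, add_zero, one_zpow]
  by_cases hj : j ≤ M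
  · rw [Nat.descFactorial_eq_factorial_mul_choose]
    have hcM : c ^ M = c ^ j * c ^ (M - j) := by
      rw [← pow_add]
      congr 1
      omega
    have h1c : (1 : ℝ) - 1 / c = (c - 1) * c⁻¹ := by field_simp
    rw [hcM, h1c, mul_pow, mul_inv, inv_pow]
    have hcj : (c ^ j : ℝ) ≠ 0 := pow_ne_zero _ hc
    push_cast
    field_simp
  · have h1 : M.descFactorial j = 0 := Nat.descFactorial_eq_zero_iff_lt.mpr (by omega)
    have h2 : M.choose j = 0 := Nat.choose_eq_zero_of_lt (by omega)
    simp [h1, h2]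
end

section
/- Let M and n be positive integers and let k_1, …, k_n be nonnegative integers with A := Σ_{i=1}^n k_i satisfying 1 ≤ A ≤ M. Then Σ_{m=1}^{M} (M choose m) (−1)^{m+A} Π_{i=1}^n (m)_{k_i} equals 0 if A < M, and equals M! if A = M, where (x)_j := x(x+1)⋯(x+j−1) is the rising factorial with (x)_0 := 1. -/
open Real Set

open Polynomial in
/-- Key finite-difference lemma: the `A`-th forward difference of a polynomial of
degree ≤ `A` is the constant `A! * (coeff A)`. -/
lemma fwdDiff_iter_poly : ∀ (A : ℕ) (p : ℝ[X]), p.degree ≤ A →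
    (fwdDiff (1:ℝ))^[A] (fun t => p.eval t) = fun _ => (A.factorial : ℝ) * p.coeff A := by
  intro A
  induction A with
  | zero =>
    intro p hp
    rw [Polynomial.eq_C_of_degree_le_zero hp]
    simp
  | succ A ih =>
    intro p hp
    set c : ℝ := p.coeff (A + 1) with hc
    set q : ℝ[X] := p - Polynomial.C c * X ^ (A + 1) with hqdef
    have hq : q.degree ≤ A := by
      rw [Polynomial.degree_le_iff_coeff_zero]
      intro m hm
      have hm' : (A : ℕ) < m := by exact_mod_cast hm
      simp only [hqdef, Polynomial.coeff_sub, Polynomial.coeff_C_mul, Polynomial.coeff_X_pow]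
      rcases eq_or_lt_of_le (Nat.succ_le_of_lt hm') with h | h
      · simp [← h, hc]
      · rw [Polynomial.coeff_eq_zero_of_degree_lt (lt_of_le_of_lt hp (by exact_mod_cast h)),
          if_neg (by omega)]
        ring
    -- the difference polynomial of X^(A+1)
    set r : ℝ[X] := (X + 1) ^ (A + 1) - X ^ (A + 1) with hrdef
    have hrcoeff : r.coeff A = (A + 1 : ℝ) := by
      simp [hrdef, Polynomial.coeff_X_add_one_pow, Polynomial.coeff_X_pow,
        Nat.choose_succ_self_right]
    have hrdeg : r.degree ≤ A := by
      have hlt : r.degree < ((A + 1 : ℕ) : WithBot ℕ) := by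
        have hd1 : ((X + 1 : ℝ[X]) ^ (A + 1)).degree = ((A + 1 : ℕ) : WithBot ℕ) := by
          rw [Polynomial.degree_pow]
          have : (X + 1 : ℝ[X]) = X + Polynomial.C 1 := by simp
          rw [this, Polynomial.degree_X_add_C]
          simp
        have hd2 : ((X : ℝ[X]) ^ (A + 1)).degree = ((A + 1 : ℕ) : WithBot ℕ) := by
          simp [Polynomial.degree_X_pow]
        have m1 : ((X + 1 : ℝ[X]) ^ (A + 1)).Monic := by
          have : (X + 1 : ℝ[X]) = X + Polynomial.C 1 := by simp
          exact (this ▸ Polynomial.monic_X_add_C (1:ℝ)).pow _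
        have hne : ((X + 1 : ℝ[X]) ^ (A + 1)) ≠ 0 := m1.ne_zero
        have hlc : ((X + 1 : ℝ[X]) ^ (A + 1)).leadingCoeff = ((X : ℝ[X]) ^ (A + 1)).leadingCoeff := by
          have m2 : ((X : ℝ[X]) ^ (A + 1)).Monic := (Polynomial.monic_X).pow _
          rw [m1.leadingCoeff, m2.leadingCoeff]
        have := Polynomial.degree_sub_lt (hd1.trans hd2.symm) hne hlc
        rwa [hd1] at this
      rw [Polynomial.degree_le_iff_coeff_zero]
      intro m hm
      have hm' : (A : ℕ) < m := by exact_mod_cast hm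
      exact Polynomial.coeff_eq_zero_of_degree_lt
        (lt_of_lt_of_le hlt (by exact_mod_cast Nat.succ_le_of_lt hm'))
    have hsplit : (fun t : ℝ => p.eval t)
        = (c • fun t : ℝ => ((X : ℝ[X]) ^ (A + 1)).eval t) + fun t => q.eval t := by
      funext t
      simp [hqdef]
    have hXpow : (fwdDiff (1:ℝ))^[A + 1] (fun t : ℝ => ((X : ℝ[X]) ^ (A + 1)).eval t)
        = fun _ => ((A+1).factorial : ℝ) := by
      rw [Function.iterate_succ_apply]
      have : fwdDiff (1:ℝ) (fun t : ℝ => ((X : ℝ[X]) ^ (A + 1)).eval t)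
          = fun t => r.eval t := by
        funext t
        simp [fwdDiff, hrdef]
      rw [this, ih r hrdeg, hrcoeff]
      funext t
      rw [Nat.factorial_succ]
      push_cast
      ring
    have hqiter : (fwdDiff (1:ℝ))^[A + 1] (fun t : ℝ => q.eval t) = fun _ => 0 := by
      rw [Function.iterate_succ_apply', ih q hq]
      simp [fwdDiff]
    rw [hsplit, fwdDiff_iter_add, fwdDiff_iter_const_smul, hXpow, hqiter]
    funext t
    have hqc : q.coeff (A+1) = 0 := by
      simp [hqdef, hc]
    have hpc : p.coeff (A+1) = c := rfl
    simp [Pi.add_apply, Pi.smul_apply, smul_eq_mul]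
    ring

/-- For positive integers `M`, `n` and nonnegative integers `k_1,…,k_n` with
`1 ≤ A := Σ_i k_i ≤ M`, the sum `Σ_{m=1}^{M} (M choose m) (−1)^{m+A} Π_i (m)_{k_i}`
equals `0` if `A < M` and equals `M!` if `A = M`. -/
theorem stmt_13 (M n : ℕ) (hM : 0 < M) (hn : 0 < n) (k : Fin n → ℕ)
    (hA1 : 1 ≤ ∑ i, k i) (hA2 : ∑ i, k i ≤ M) :
    ((∑ i, k i) < M →
      (∑ m ∈ Finset.Icc 1 M,
        (M.choose m : ℝ) * (-1) ^ (m + ∑ i, k i) * ∏ i, risingFac (m : ℝ) (k i)) = 0) ∧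
    ((∑ i, k i) = M →
      (∑ m ∈ Finset.Icc 1 M,
        (M.choose m : ℝ) * (-1) ^ (m + ∑ i, k i) * ∏ i, risingFac (m : ℝ) (k i))
        = (M.factorial : ℝ)) := by
  classical
  set A := ∑ i, k i with hA
  obtain ⟨i0, hi0⟩ : ∃ i, 1 ≤ k i := by
    by_contra h
    push_neg at h
    have : A = 0 := Finset.sum_eq_zero fun i _ => by have := h i; omega
    omega
  set p : Polynomial ℝ :=
    ∏ i, ∏ j ∈ Finset.range (k i), (Polynomial.X + Polynomial.C (j : ℝ)) with hpdef
  have hmonic : p.Monic :=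
    Polynomial.monic_prod_of_monic _ _ fun i _ =>
      Polynomial.monic_prod_of_monic _ _ fun j _ => Polynomial.monic_X_add_C _
  have hdeg : p.natDegree = A := by
    rw [hpdef, Polynomial.natDegree_prod_of_monic _ _
      (fun i _ => Polynomial.monic_prod_of_monic _ _ fun j _ => Polynomial.monic_X_add_C _)]
    refine Finset.sum_congr rfl fun i _ => ?_
    rw [Polynomial.natDegree_prod_of_monic _ _ fun j _ => Polynomial.monic_X_add_C _]
    simp only [Polynomial.natDegree_X_add_C]
    simp
  have heval : ∀ m : ℝ, p.eval m = ∏ i, risingFac m (k i) := by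
    intro m
    simp [hpdef, risingFac, Polynomial.eval_prod]
  have heval0 : (∏ i, risingFac (0 : ℝ) (k i)) = 0 := by
    refine Finset.prod_eq_zero (Finset.mem_univ i0) ?_
    unfold risingFac
    refine Finset.prod_eq_zero (Finset.mem_range.2 hi0) (by simp)
  have hdegle : p.degree ≤ (M : WithBot ℕ) := by
    refine Polynomial.degree_le_natDegree.trans ?_
    rw [hdeg]
    exact_mod_cast hA2
  have hiter := fwdDiff_iter_poly M p hdegle
  have hshift := fwdDiff_iter_eq_sum_shift (1 : ℝ) (fun t => Polynomial.eval t p) M 0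
  rw [hiter] at hshift
  -- hshift : M! * p.coeff M = Σ_{m ∈ range (M+1)} ((-1)^(M-m) * C(M,m)) • p.eval m
  have hshift' : (M.factorial : ℝ) * p.coeff M
      = ∑ m ∈ Finset.range (M + 1),
          (-1 : ℝ) ^ (M - m) * (M.choose m : ℝ) * ∏ i, risingFac (m : ℝ) (k i) := by
    have hs : (M.factorial : ℝ) * p.coeff M
        = ∑ j ∈ Finset.range (M + 1),
            ((-1 : ℤ) ^ (M - j) * (M.choose j : ℤ)) • Polynomial.eval ((0 : ℝ) + j • (1 : ℝ)) p :=
      hshift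
    rw [hs]
    refine Finset.sum_congr rfl fun m hm => ?_
    rw [← heval]
    push_cast
    simp [zsmul_eq_mul]
  -- extend the target sum to range (M+1)
  have hext :
      (∑ m ∈ Finset.Icc 1 M, (M.choose m : ℝ) * (-1) ^ (m + A) * ∏ i, risingFac (m : ℝ) (k i))
      = ∑ m ∈ Finset.range (M + 1),
          (M.choose m : ℝ) * (-1) ^ (m + A) * ∏ i, risingFac (m : ℝ) (k i) := by
    refine Finset.sum_subset (fun x hx => ?_) (fun x hx hx' => ?_)
    · simp only [Finset.mem_Icc] at hx
      exact Finset.mem_range.2 (by omega)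
    · simp only [Finset.mem_range] at hx
      simp only [Finset.mem_Icc] at hx'
      have hx0 : x = 0 := by omega
      subst hx0
      simp only [Nat.cast_zero]
      rw [heval0]
      ring
  have hsign : ∀ m ∈ Finset.range (M + 1),
      (-1 : ℝ) ^ (m + A) = (-1) ^ (M + A) * (-1) ^ (M - m) := by
    intro m hm
    have hmle : m ≤ M := by simpa [Nat.lt_succ_iff] using Finset.mem_range.1 hm
    rw [← pow_add]
    have : M + A + (M - m) = 2 * (M - m) + (m + A) := by omega
    rw [this]
    simp [pow_add, pow_mul]
  have hmain :
      (∑ m ∈ Finset.Icc 1 M, (M.choose m : ℝ) * (-1) ^ (m + A) * ∏ i, risingFac (m : ℝ) (k i))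
      = (-1) ^ (M + A) * ((M.factorial : ℝ) * p.coeff M) := by
    rw [hext, hshift', Finset.mul_sum]
    refine Finset.sum_congr rfl fun m hm => ?_
    rw [hsign m hm]
    ring
  constructor
  · intro hlt
    rw [hmain, Polynomial.coeff_eq_zero_of_natDegree_lt (by rw [hdeg]; exact hlt)]
    ring
  · intro heq
    rw [hmain]
    have : p.coeff M = 1 := by
      rw [← heq, ← hdeg] at *
      exact hmonic.coeff_natDegree
    rw [this, heq]
    have : (-1 : ℝ) ^ (M + M) = 1 := by
      rw [← two_mul, pow_mul]
      simp
    rw [this]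
    ring
end
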